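/- arXiv:2603.25824 — 2 statements merged into one kernel-verified Lean document; each statement's English description precedes it below -/
import Mathlib

section
/- Fix p* ∈ ℝ^{m+1}. For q ∈ ℝ^{(m+1)×M}, let f_q be its coupling polynomial and P_6(q) = Σ_{M∣b}[f_q(X,Y)^3 · f_q(X^{−1},Y^{−1})^3]_{0,b}. Suppose q has every entry strictly between 0 and 1, satisfies Σ_{j=0}^{M−1} q_{i,j} = p*_i for every i ∈ {0,…,m}, and is a local minimum of P_6 on the constraint set { q' ∈ ℝ^{(m+1)×M} : q'_{i,j} ∈ [0,1] for all i,j, and Σ_{j} q'_{i,j} = p*_i for all i }. Then there exist real numbers c_0, …, c_m such that Σ_{M∣b}[f_q(X,Y)^3 · f_q(X^{−1},Y^{−1})^2]_{i, b+j} = c_i for all i ∈ {0,…,m} and all j ∈ {0,…,M−1}; that is, the quantity Σ_{M∣b}[f_q^3 \bar{f}_q^2]_{i,b+j} does not depend on j. -/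
open scoped Classical

/-- The coupling polynomial with exponents scaled by `s`:
`f_q(X^s, Y^s) = ∑_{i=0}^{m} ∑_{j=0}^{M-1} q_{i,j} X^{s·i} Y^{s·j}`,
as an element of the group algebra of `ℤ × ℤ` over `ℝ`. -/
noncomputable def couplingPoly (m M : ℕ) (q : Fin (m + 1) → Fin M → ℝ) (s : ℤ) :
    AddMonoidAlgebra ℝ (ℤ × ℤ) :=
  ∑ i : Fin (m + 1), ∑ j : Fin M,
    AddMonoidAlgebra.single (s * (i : ℤ), s * (j : ℤ)) (q i j)

/-- `P₆(q) = Σ_{M∣b}[f_q(X,Y)³ · f_q(X⁻¹,Y⁻¹)³]_{0,b}`. -/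
noncomputable def P6 (m M : ℕ) (q : Fin (m + 1) → Fin M → ℝ) : ℝ :=
  ∑ᶠ b ∈ {b : ℤ | (M : ℤ) ∣ b},
    (couplingPoly m M q 1 ^ 3 * couplingPoly m M q (-1) ^ 3).coeff (0, b)

open Function
namespace P6KKT

abbrev AMA := AddMonoidAlgebra ℝ (ℤ × ℤ)

noncomputable def S (M : ℕ) : Set ℤ := {b : ℤ | (M : ℤ) ∣ b}

lemma supp_fin (x : AMA) (a c : ℤ) :
    (Function.support fun b : ℤ => x.coeff (a, b + c)).Finite := by
  apply Set.Finite.subset ((x.coeff.support.finite_toSet.image Prod.snd).image (fun y => y - c))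
  intro b hb
  exact ⟨b + c, ⟨(a, b + c), by simpa using Finsupp.mem_support_iff.2 hb, rfl⟩, by ring⟩

lemma supp_fin' (x : AMA) (a : ℤ) :
    (Function.support fun b : ℤ => x.coeff (a, b)).Finite := by
  simpa using supp_fin x a 0

/-- summation over multiples of M of the coefficient at (0, b), as a linear map. -/
noncomputable def Tl (M : ℕ) : AMA →ₗ[ℝ] ℝ where
  toFun x := ∑ᶠ b ∈ S M, x.coeff (0, b)
  map_add' x y := by
    simp only [AddMonoidAlgebra.coeff_add, Finsupp.add_apply]
    exact finsum_mem_add_distrib' ((supp_fin' x 0).inter_of_right _)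
      ((supp_fin' y 0).inter_of_right _)
  map_smul' t x := by
    simp only [RingHom.id_apply, smul_eq_mul]
    rw [finsum_mem_def, finsum_mem_def]
    have h1 : ∀ b : ℤ, Set.indicator (S M) (fun b => (t • x).coeff (0, b)) b
        = t • Set.indicator (S M) (fun b => x.coeff (0, b)) b := by
      intro b
      rw [Set.indicator_apply, Set.indicator_apply]
      split <;> simp <;> rfl
    simp only [h1]
    rw [← smul_finsum' t (f := Set.indicator (S M) fun b => x.coeff (0,b))
      (((supp_fin' x 0).inter_of_right _).subset (by
        intro b hb
        have h2 : Set.indicator (S M) (fun b => x.coeff (0,b)) b ≠ 0 := hb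
        rw [Set.indicator_apply] at h2
        by_cases hbS : b ∈ S M
        · simp [hbS] at h2 ⊢; exact ⟨hbS, h2⟩
        · simp [hbS] at h2))]
    simp

lemma Tl_const_mul (M : ℕ) (c : ℝ) (x : AMA) :
    Tl M (AddMonoidAlgebra.single (0 : ℤ × ℤ) c * x) = c * Tl M x := by
  have h : AddMonoidAlgebra.single (0 : ℤ × ℤ) c * x = c • x := by
    ext p
    rw [AddMonoidAlgebra.coeff_single_mul_apply]
    simp only [neg_zero, zero_add]
    exact (Finsupp.smul_apply (b := c) (v := x.coeff) (a := p)).symm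
  rw [h, map_smul, smul_eq_mul]

lemma Tl_apply (M : ℕ) (x : AMA) : Tl M x = ∑ᶠ b ∈ S M, x.coeff (0, b) := rfl

lemma Tl_mul_single (M : ℕ) (x : AMA) (i j : ℤ) :
    Tl M (x * AddMonoidAlgebra.single (-i, -j) 1) = ∑ᶠ b ∈ S M, x.coeff (i, b + j) := by
  rw [Tl_apply]
  apply finsum_mem_congr rfl
  intro b _
  rw [AddMonoidAlgebra.coeff_mul_single_apply, mul_one]
  have : (0, b) - ((-i, -j) : ℤ × ℤ) = (i, b + j) := by
    simp [Prod.ext_iff]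
  rw [← sub_eq_add_neg, this]

/-- the involution X ↦ X⁻¹, Y ↦ Y⁻¹. -/
noncomputable def flip : AMA ≃ₐ[ℝ] AMA :=
  AddMonoidAlgebra.domCongr ℝ ℝ (AddEquiv.neg (ℤ × ℤ))

lemma flip_apply (x : AMA) (p : ℤ × ℤ) : (flip x).coeff p = x.coeff (-p) := by
  simp [flip]

end P6KKT

namespace P6KKT

lemma flip_couplingPoly (m M : ℕ) (q : Fin (m + 1) → Fin M → ℝ) (s : ℤ) :
    flip (couplingPoly m M q s) = couplingPoly m M q (-s) := by
  unfold couplingPoly flip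
  rw [map_sum]
  apply Finset.sum_congr rfl
  intro i _
  rw [map_sum]
  apply Finset.sum_congr rfl
  intro j _
  rw [AddMonoidAlgebra.domCongr_single]
  congr 1
  simp [Prod.ext_iff]

lemma couplingPoly_add_mul (m M : ℕ) (q d : Fin (m + 1) → Fin M → ℝ) (t : ℝ) (s : ℤ) :
    couplingPoly m M (fun i j => q i j + t * d i j) s
      = couplingPoly m M q s
        + AddMonoidAlgebra.single (0 : ℤ × ℤ) t * couplingPoly m M d s := by
  unfold couplingPoly
  rw [Finset.mul_sum, ← Finset.sum_add_distrib]
  apply Finset.sum_congr rfl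
  intro i _
  rw [Finset.mul_sum, ← Finset.sum_add_distrib]
  apply Finset.sum_congr rfl
  intro j _
  rw [AddMonoidAlgebra.single_mul_single, zero_add, ← AddMonoidAlgebra.single_add]

lemma couplingPoly_delta (m M : ℕ) (i0 : Fin (m + 1)) (j0 : Fin M) (s : ℤ) :
    couplingPoly m M (fun i j => if i = i0 ∧ j = j0 then (1 : ℝ) else 0) s
      = AddMonoidAlgebra.single (s * (i0 : ℤ), s * (j0 : ℤ)) 1 := by
  unfold couplingPoly
  rw [Finset.sum_eq_single i0]
  · rw [Finset.sum_eq_single j0]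
    · simp
    · intro j _ hj; simp [hj]
    · simp
  · intro i _ hi
    apply Finset.sum_eq_zero
    intro j _
    simp [hi]
  · simp

lemma Tl_mul_single' (M : ℕ) (x : AMA) (i j : ℤ) :
    Tl M (x * AddMonoidAlgebra.single ((i, j) : ℤ × ℤ) 1) = ∑ᶠ b ∈ S M, x.coeff (-i, b - j) := by
  rw [Tl_apply]
  apply finsum_mem_congr rfl
  intro b _
  rw [AddMonoidAlgebra.coeff_mul_single_apply, mul_one]
  have : (0, b) - ((i, j) : ℤ × ℤ) = (-i, b - j) := by
    simp [Prod.ext_iff]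
  rw [← sub_eq_add_neg, this]

lemma key_symm (M : ℕ) (x : AMA) (i j : ℤ) :
    (∑ᶠ b ∈ S M, x.coeff (-i, b - j)) = ∑ᶠ b ∈ S M, (flip x).coeff (i, b + j) := by
  apply finsum_mem_eq_of_bijOn (fun b => -b)
  · refine ⟨fun b hb => ?_, fun b _ c _ h => neg_injective h, fun b hb => ⟨-b, ?_, by ring⟩⟩
    · simpa [S] using (dvd_neg.mpr hb : (M : ℤ) ∣ -b)
    · simpa [S] using (dvd_neg.mpr hb : (M : ℤ) ∣ -b)
  · intro b _
    rw [flip_apply]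
    congr 1
    simp [Prod.ext_iff]
    ring

lemma hasDerivAt_poly (a : ℕ → ℝ) :
    HasDerivAt (fun t : ℝ => ∑ k ∈ Finset.range 7, a k * t ^ k) (a 1) 0 := by
  have h : HasDerivAt (fun t : ℝ => ∑ k ∈ Finset.range 7, a k * t ^ k)
      (∑ k ∈ Finset.range 7, a k * (k * 0 ^ (k - 1))) 0 :=
    HasDerivAt.fun_sum fun k _ => (hasDerivAt_pow k 0).const_mul (a k)
  convert h using 1
  norm_num [Finset.sum_range_succ]

lemma local_min_coeff (a : ℕ → ℝ)
    (h : IsLocalMin (fun t : ℝ => ∑ k ∈ Finset.range 7, a k * t ^ k) 0) : a 1 = 0 := by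
  have h1 := h.deriv_eq_zero
  rwa [(hasDerivAt_poly a).deriv] at h1

lemma Tl_nat_mul (M : ℕ) (n : ℕ) (x : AMA) :
    Tl M ((n : AMA) * x) = (n : ℝ) * Tl M x := by
  rw [← nsmul_eq_mul, map_nsmul, nsmul_eq_mul]

lemma couplingPoly_sub (m M : ℕ) (q1 q2 : Fin (m + 1) → Fin M → ℝ) (s : ℤ) :
    couplingPoly m M (fun i j => q1 i j - q2 i j) s
      = couplingPoly m M q1 s - couplingPoly m M q2 s := by
  unfold couplingPoly
  rw [← Finset.sum_sub_distrib]
  apply Finset.sum_congr rfl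
  intro i _
  rw [← Finset.sum_sub_distrib]
  apply Finset.sum_congr rfl
  intro j _
  show AddMonoidAlgebra.single (s * (i:ℤ), s * (j:ℤ)) (q1 i j - q2 i j) = _
  ext p
  rw [AddMonoidAlgebra.coeff_sub, Finsupp.sub_apply]
  simp only [AddMonoidAlgebra.coeff_single, Finsupp.single_apply]
  split <;> simp

lemma local_min_coeff' (a0 a1 a2 a3 a4 a5 a6 : ℝ)
    (h : IsLocalMin
      (fun t : ℝ => a0 + a1*t + a2*t^2 + a3*t^3 + a4*t^4 + a5*t^5 + a6*t^6) 0) :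
    a1 = 0 := by
  have H : HasDerivAt
      (fun t : ℝ => a0 + a1*t + a2*t^2 + a3*t^3 + a4*t^4 + a5*t^5 + a6*t^6) a1 0 := by
    have H0 : HasDerivAt
        (fun t : ℝ => a0 + a1*t + a2*t^2 + a3*t^3 + a4*t^4 + a5*t^5 + a6*t^6)
        (0 + a1*1 + a2*((2:ℕ)*(0:ℝ)^(2-1)) + a3*((3:ℕ)*(0:ℝ)^(3-1)) + a4*((4:ℕ)*(0:ℝ)^(4-1))
          + a5*((5:ℕ)*(0:ℝ)^(5-1)) + a6*((6:ℕ)*(0:ℝ)^(6-1))) 0 :=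
      (((((((hasDerivAt_const (0:ℝ) a0).add ((hasDerivAt_id (0:ℝ)).const_mul a1)).add
        ((hasDerivAt_pow 2 (0:ℝ)).const_mul a2)).add ((hasDerivAt_pow 3 (0:ℝ)).const_mul a3)).add
        ((hasDerivAt_pow 4 (0:ℝ)).const_mul a4)).add ((hasDerivAt_pow 5 (0:ℝ)).const_mul a5)).add
        ((hasDerivAt_pow 6 (0:ℝ)).const_mul a6))
    convert H0 using 1
    norm_num
  have h1 := h.deriv_eq_zero
  rwa [H.deriv] at h1

end P6KKT

open P6KKT

/-- **Lemma: KKT condition for the cycle-6 objective.**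
If `q` has all entries strictly between `0` and `1`, has row sums `p*ᵢ`, and
is a local minimum of `P₆` on the constraint set
`{q' : q'_{i,j} ∈ [0,1], Σ_j q'_{i,j} = p*ᵢ}`, then there are reals
`c₀, …, c_m` with `Σ_{M∣b}[f_q³ f̄_q²]_{i,b+j} = cᵢ` for all `i, j`;
i.e. that quantity does not depend on `j`. -/
theorem P6_local_min_KKT (m M : ℕ) (hM : 1 ≤ M)
    (pstar : Fin (m + 1) → ℝ)
    (q : Fin (m + 1) → Fin M → ℝ)
    (hq0 : ∀ i j, 0 < q i j) (hq1 : ∀ i j, q i j < 1)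
    (hrow : ∀ i, ∑ j : Fin M, q i j = pstar i)
    (hmin : IsLocalMinOn (P6 m M)
      {q' : Fin (m + 1) → Fin M → ℝ |
        (∀ i j, q' i j ∈ Set.Icc (0 : ℝ) 1) ∧
        ∀ i, ∑ j : Fin M, q' i j = pstar i} q) :
    ∃ c : Fin (m + 1) → ℝ, ∀ (i : Fin (m + 1)) (j : Fin M),
      (∑ᶠ b ∈ {b : ℤ | (M : ℤ) ∣ b},
        (couplingPoly m M q 1 ^ 3 * couplingPoly m M q (-1) ^ 2).coeff
          ((i : ℤ), b + (j : ℤ))) = c i := by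
  classical
  set Cs : Set (Fin (m + 1) → Fin M → ℝ) :=
    {q' : Fin (m + 1) → Fin M → ℝ |
        (∀ i j, q' i j ∈ Set.Icc (0 : ℝ) 1) ∧
        ∀ i, ∑ j : Fin M, q' i j = pstar i} with hCs
  have key : ∀ (i : Fin (m + 1)) (j j' : Fin M),
      (∑ᶠ b ∈ S M, (couplingPoly m M q 1 ^ 3 * couplingPoly m M q (-1) ^ 2).coeff
          ((i : ℤ), b + (j : ℤ)))
        = ∑ᶠ b ∈ S M, (couplingPoly m M q 1 ^ 3 * couplingPoly m M q (-1) ^ 2).coeff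
          ((i : ℤ), b + ((j' : ℤ))) := by
    intro i j j'
    set A := couplingPoly m M q 1 with hA
    set C := couplingPoly m M q (-1) with hC
    set d : Fin (m + 1) → Fin M → ℝ := fun a b =>
      (if a = i ∧ b = j then (1 : ℝ) else 0)
        + (-1 : ℝ) * (if a = i ∧ b = j' then (1 : ℝ) else 0) with hd
    set B := couplingPoly m M d 1 with hBdef
    set D := couplingPoly m M d (-1) with hDdef
    have hB : B = AddMonoidAlgebra.single (((i : ℤ), (j : ℤ)) : ℤ × ℤ) 1
        - AddMonoidAlgebra.single (((i : ℤ), (j' : ℤ)) : ℤ × ℤ) 1 := by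
      rw [hBdef, hd, couplingPoly_add_mul, couplingPoly_delta, couplingPoly_delta,
        AddMonoidAlgebra.single_mul_single]
      simp only [sub_eq_add_neg, zero_add, one_mul, neg_mul, mul_one]
      congr 1 <;> try rfl
      exact AddMonoidAlgebra.single_neg _ _
    have hD : D = AddMonoidAlgebra.single ((-(i : ℤ), -(j : ℤ)) : ℤ × ℤ) 1
        - AddMonoidAlgebra.single ((-(i : ℤ), -(j' : ℤ)) : ℤ × ℤ) 1 := by
      rw [hDdef, hd, couplingPoly_add_mul, couplingPoly_delta, couplingPoly_delta,
        AddMonoidAlgebra.single_mul_single]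
      simp only [sub_eq_add_neg, zero_add, one_mul, neg_mul, mul_one]
      congr 1 <;> try rfl
      exact AddMonoidAlgebra.single_neg _ _
    -- the path
    have hgam : ∀ t : ℝ, (fun a b => q a b + t * d a b) ∈ Cs → True := fun _ _ => trivial
    -- eventually in the constraint set
    have hmem : ∀ᶠ t in nhds (0 : ℝ), (fun a b => q a b + t * d a b) ∈ Cs := by
      have h1 : ∀ᶠ t in nhds (0 : ℝ), ∀ a b, q a b + t * d a b ∈ Set.Icc (0 : ℝ) 1 := by
        rw [Filter.eventually_all]
        intro a
        rw [Filter.eventually_all]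
        intro b
        have hc : ContinuousAt (fun t : ℝ => q a b + t * d a b) 0 := by fun_prop
        have hv : (fun t : ℝ => q a b + t * d a b) 0 ∈ Set.Ioo (0 : ℝ) 1 := by
          simpa using Set.mem_Ioo.mpr ⟨hq0 a b, hq1 a b⟩
        filter_upwards [hc.eventually_mem (isOpen_Ioo.mem_nhds hv)] with t ht
        exact Set.Ioo_subset_Icc_self ht
      filter_upwards [h1] with t ht
      refine ⟨ht, fun a => ?_⟩
      rw [Finset.sum_add_distrib, hrow]
      have hsum : ∀ (j0 : Fin M),
          (∑ b : Fin M, (if a = i ∧ b = j0 then (1 : ℝ) else 0))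
            = if a = i then 1 else 0 := by
        intro j0
        by_cases h : a = i
        · simp [h]
        · simp [h]
      have : (∑ b : Fin M, t * d a b) = 0 := by
        rw [← Finset.mul_sum]
        simp only [hd, Finset.sum_add_distrib, ← Finset.mul_sum, hsum]
        ring
      rw [this, add_zero]
    have htend : Filter.Tendsto (fun t : ℝ => fun a b => q a b + t * d a b)
        (nhds 0) (nhdsWithin q Cs) := by
      rw [tendsto_nhdsWithin_iff]
      constructor
      · have hcont : Continuous (fun t : ℝ => fun a b => q a b + t * d a b) := by
          apply continuous_pi; intro a; apply continuous_pi; intro b; fun_prop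
        have h0 : (fun a b => q a b + (0:ℝ) * d a b) = q := by
          funext a b; simp
        simpa [h0] using hcont.tendsto 0
      · exact hmem
    have hloc : IsLocalMin (fun t : ℝ => P6 m M (fun a b => q a b + t * d a b)) 0 := by
      have hmin' : IsMinFilter (P6 m M) (nhdsWithin q Cs)
          ((fun t : ℝ => fun a b => q a b + t * d a b) 0) := by
        rw [show ((fun t : ℝ => fun a b => q a b + t * d a b) 0) = q from by funext a b; simp]
        exact hmin
      exact IsMinFilter.comp_tendsto (f := P6 m M)
        (g := fun t : ℝ => fun a b => q a b + t * d a b) hmin' htend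
    -- expansion
    have hP6 : ∀ q' : Fin (m + 1) → Fin M → ℝ, P6 m M q'
        = Tl M (couplingPoly m M q' 1 ^ 3 * couplingPoly m M q' (-1) ^ 3) := fun _ => rfl
    have hring : ∀ u : AMA, (A + u * B) ^ 3 * (C + u * D) ^ 3 =
        A^3*C^3
        + u^1 * (((3:ℕ) : AMA) * (A^2*B*C^3) + ((3:ℕ) : AMA) * (A^3*C^2*D))
        + u^2 * (((3:ℕ) : AMA) * (A*B^2*C^3) + ((9:ℕ) : AMA) * (A^2*B*C^2*D)
            + ((3:ℕ) : AMA) * (A^3*C*D^2))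
        + u^3 * (B^3*C^3 + ((9:ℕ) : AMA) * (A*B^2*C^2*D) + ((9:ℕ) : AMA) * (A^2*B*C*D^2)
            + A^3*D^3)
        + u^4 * (((3:ℕ) : AMA) * (B^3*C^2*D) + ((9:ℕ) : AMA) * (A*B^2*C*D^2)
            + ((3:ℕ) : AMA) * (A^2*B*D^3))
        + u^5 * (((3:ℕ) : AMA) * (B^3*C*D^2) + ((3:ℕ) : AMA) * (A*B^2*D^3))
        + u^6 * (B^3*D^3) := by
      intro u
      push_cast
      ring
    have hexp : (fun t : ℝ => P6 m M (fun a b => q a b + t * d a b))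
        = fun t : ℝ =>
          Tl M (A^3*C^3)
          + (3 * Tl M (A^2*B*C^3) + 3 * Tl M (A^3*C^2*D)) * t
          + (3 * Tl M (A*B^2*C^3) + 9 * Tl M (A^2*B*C^2*D) + 3 * Tl M (A^3*C*D^2)) * t^2
          + (Tl M (B^3*C^3) + 9 * Tl M (A*B^2*C^2*D) + 9 * Tl M (A^2*B*C*D^2)
              + Tl M (A^3*D^3)) * t^3
          + (3 * Tl M (B^3*C^2*D) + 9 * Tl M (A*B^2*C*D^2) + 3 * Tl M (A^2*B*D^3)) * t^4
          + (3 * Tl M (B^3*C*D^2) + 3 * Tl M (A*B^2*D^3)) * t^5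
          + (Tl M (B^3*D^3)) * t^6 := by
      funext t
      rw [hP6, couplingPoly_add_mul m M q d t 1, couplingPoly_add_mul m M q d t (-1),
        ← hA, ← hC, ← hBdef, ← hDdef, hring (AddMonoidAlgebra.single (0 : ℤ × ℤ) t)]
      have hu : ∀ k : ℕ, (AddMonoidAlgebra.single (0 : ℤ × ℤ) t) ^ k
          = AddMonoidAlgebra.single (0 : ℤ × ℤ) (t ^ k) := by
        intro k
        rw [AddMonoidAlgebra.single_pow]
        simp
      simp only [map_add, hu, Tl_const_mul, Tl_nat_mul, map_mul]
      push_cast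
      ring
    have hlm : IsLocalMin (fun t : ℝ =>
        Tl M (A^3*C^3)
        + (3 * Tl M (A^2*B*C^3) + 3 * Tl M (A^3*C^2*D)) * t
        + (3 * Tl M (A*B^2*C^3) + 9 * Tl M (A^2*B*C^2*D) + 3 * Tl M (A^3*C*D^2)) * t^2
        + (Tl M (B^3*C^3) + 9 * Tl M (A*B^2*C^2*D) + 9 * Tl M (A^2*B*C*D^2)
            + Tl M (A^3*D^3)) * t^3
        + (3 * Tl M (B^3*C^2*D) + 9 * Tl M (A*B^2*C*D^2) + 3 * Tl M (A^2*B*D^3)) * t^4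
        + (3 * Tl M (B^3*C*D^2) + 3 * Tl M (A*B^2*D^3)) * t^5
        + (Tl M (B^3*D^3)) * t^6) 0 := by
      rw [← hexp]
      exact hloc
    have hc1 : 3 * Tl M (A^2*B*C^3) + 3 * Tl M (A^3*C^2*D) = 0 := by
      have := local_min_coeff' (Tl M (A^3*C^3))
        (3 * Tl M (A^2*B*C^3) + 3 * Tl M (A^3*C^2*D))
        (3 * Tl M (A*B^2*C^3) + 9 * Tl M (A^2*B*C^2*D) + 3 * Tl M (A^3*C*D^2))
        (Tl M (B^3*C^3) + 9 * Tl M (A*B^2*C^2*D) + 9 * Tl M (A^2*B*C*D^2) + Tl M (A^3*D^3))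
        (3 * Tl M (B^3*C^2*D) + 9 * Tl M (A*B^2*C*D^2) + 3 * Tl M (A^2*B*D^3))
        (3 * Tl M (B^3*C*D^2) + 3 * Tl M (A*B^2*D^3))
        (Tl M (B^3*D^3)) hlm
      exact this
    -- identify the two pieces with g-values
    have hTD : Tl M (A^3*C^2*D)
        = (∑ᶠ b ∈ S M, (A^3*C^2).coeff ((i : ℤ), b + (j : ℤ)))
          - ∑ᶠ b ∈ S M, (A^3*C^2).coeff ((i : ℤ), b + ((j' : ℤ))) := by
      have h1 : A^3*C^2*D = (A^3*C^2) * AddMonoidAlgebra.single ((-(i:ℤ), -(j:ℤ)) : ℤ × ℤ) 1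
          - (A^3*C^2) * AddMonoidAlgebra.single ((-(i:ℤ), -(j':ℤ)) : ℤ × ℤ) 1 := by
        rw [hD]; ring
      rw [h1, map_sub, Tl_mul_single, Tl_mul_single]
    have hflip : flip (A^2*C^3) = A^3*C^2 := by
      have hfA : flip A = C := by rw [hA, hC, flip_couplingPoly]
      have hfC : flip C = A := by
        rw [hC, hA, flip_couplingPoly]
        norm_num
      rw [map_mul, map_pow, map_pow, hfA, hfC]
      ring
    have hTB : Tl M (A^2*B*C^3)
        = (∑ᶠ b ∈ S M, (A^3*C^2).coeff ((i : ℤ), b + (j : ℤ)))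
          - ∑ᶠ b ∈ S M, (A^3*C^2).coeff ((i : ℤ), b + ((j' : ℤ))) := by
      have h1 : A^2*B*C^3 = (A^2*C^3) * AddMonoidAlgebra.single (((i:ℤ), (j:ℤ)) : ℤ × ℤ) 1
          - (A^2*C^3) * AddMonoidAlgebra.single (((i:ℤ), (j':ℤ)) : ℤ × ℤ) 1 := by
        rw [hB]; ring
      rw [h1, map_sub, Tl_mul_single', Tl_mul_single', key_symm, key_symm]
      simp only [hflip]
    rw [hTB, hTD] at hc1
    linarith
  exact ⟨fun i => ∑ᶠ b ∈ S M, (couplingPoly m M q 1 ^ 3 * couplingPoly m M q (-1) ^ 2).coeff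
      ((i : ℤ), b + ((⟨0, hM⟩ : Fin M) : ℤ)), fun i j => key i j ⟨0, hM⟩⟩
end

section
/- Let k, l ≥ 2 be integers. For q ∈ ℝ^{(m+1)×M}, define P^𝒟_{2k,2l}(q) = Σ_{M∣b_1, M∣b_2} [ f(X_1X_2,Y_1Y_2) f(X_1^{−1}X_2^{−1},Y_1^{−1}Y_2^{−1}) f(X_1,Y_1)^{k−1} f(X_1^{−1},Y_1^{−1})^{k−1} f(X_2,Y_2)^{l−1} f(X_2^{−1},Y_2^{−1})^{l−1} ]_{0,0,b_1,b_2}, where f is built from q. Then P^𝒟_{2k,2l} is differentiable in q, and for every i ∈ {0,…,m}, j ∈ {0,…,M−1}: ∂P^𝒟_{2k,2l}/∂q_{i,j} = 2 Σ_{M∣b_1, M∣b_2} ( [ f(X_1X_2,Y_1Y_2) f(X_1,Y_1)^{k−1} f(X_1^{−1},Y_1^{−1})^{k−1} f(X_2,Y_2)^{l−1} f(X_2^{−1},Y_2^{−1})^{l−1} ]_{i,i,b_1+j,b_2+j} + (k−1)[ f(X_1X_2,Y_1Y_2) f(X_1^{−1}X_2^{−1},Y_1^{−1}Y_2^{−1})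 f(X_1,Y_1)^{k−1} f(X_1^{−1},Y_1^{−1})^{k−2} f(X_2,Y_2)^{l−1} f(X_2^{−1},Y_2^{−1})^{l−1} ]_{i,0,b_1+j,b_2} + (l−1)[ f(X_1X_2,Y_1Y_2) f(X_1^{−1}X_2^{−1},Y_1^{−1}Y_2^{−1}) f(X_1,Y_1)^{k−1} f(X_1^{−1},Y_1^{−1})^{k−1} f(X_2,Y_2)^{l−1} f(X_2^{−1},Y_2^{−1})^{l−2} ]_{0,i,b_1,b_2+j} ). -/
open scoped Classical

/-- A monomial-substituted coupling polynomial in the four-variable Laurent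
polynomial ring (the group algebra over `ℝ` of `ℤ⁴`):
`couplingPoly4 q s₁ s₂ t₁ t₂ = Σ_{i,j} q_{i,j} X₁^{s₁·i} X₂^{s₂·i} Y₁^{t₁·j} Y₂^{t₂·j}`.
E.g. `couplingPoly4 q 1 1 1 1 = f(X₁X₂, Y₁Y₂)`,
`couplingPoly4 q 1 0 1 0 = f(X₁,Y₁)`, etc. -/
noncomputable def couplingPoly4 (m M : ℕ) (q : Fin (m + 1) → Fin M → ℝ)
    (s₁ s₂ t₁ t₂ : ℤ) : AddMonoidAlgebra ℝ (ℤ × ℤ × ℤ × ℤ) :=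
  ∑ i : Fin (m + 1), ∑ j : Fin M,
    AddMonoidAlgebra.single
      (s₁ * (i : ℤ), s₂ * (i : ℤ), t₁ * (j : ℤ), t₂ * (j : ℤ)) (q i j)

/-- `P^𝒟_{2k,2l}(q) = Σ_{M∣b₁,M∣b₂}[ f(X₁X₂,Y₁Y₂) f(X₁⁻¹X₂⁻¹,Y₁⁻¹Y₂⁻¹)
  f(X₁,Y₁)^{k−1} f(X₁⁻¹,Y₁⁻¹)^{k−1} f(X₂,Y₂)^{l−1} f(X₂⁻¹,Y₂⁻¹)^{l−1} ]_{0,0,b₁,b₂}`. -/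
noncomputable def PDom (m M k l : ℕ) (q : Fin (m + 1) → Fin M → ℝ) : ℝ :=
  ∑ᶠ b ∈ {b : ℤ × ℤ | (M : ℤ) ∣ b.1 ∧ (M : ℤ) ∣ b.2},
    (couplingPoly4 m M q 1 1 1 1 * couplingPoly4 m M q (-1) (-1) (-1) (-1) *
      couplingPoly4 m M q 1 0 1 0 ^ (k - 1) *
      couplingPoly4 m M q (-1) 0 (-1) 0 ^ (k - 1) *
      couplingPoly4 m M q 0 1 0 1 ^ (l - 1) *
      couplingPoly4 m M q 0 (-1) 0 (-1) ^ (l - 1)).coeff (0, 0, b.1, b.2)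

namespace PDomAux
abbrev G4 : Type := ℤ × ℤ × ℤ × ℤ
abbrev A4 : Type := AddMonoidAlgebra ℝ G4


/-- bound on the last two (Y) coordinates of the support -/
def Bnd (r : ℤ) (g : A4) : Prop := ∀ x ∈ g.coeff.support, |x.2.2.1| ≤ r ∧ |x.2.2.2| ≤ r

theorem Bnd.mono {r r' : ℤ} {g : A4} (h : Bnd r g) (hr : r ≤ r') : Bnd r' g :=
  fun x hx => ⟨(h x hx).1.trans hr, (h x hx).2.trans hr⟩

theorem Bnd.mul {r s : ℤ} {f g : A4} (hf : Bnd r f) (hg : Bnd s g) : Bnd (r + s) (f * g) := by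
  intro x hx
  have := AddMonoidAlgebra.support_coeff_mul_subset f g hx
  rw [Finset.mem_add] at this
  obtain ⟨a, ha, b, hb, rfl⟩ := this
  obtain ⟨ha1, ha2⟩ := hf a ha
  obtain ⟨hb1, hb2⟩ := hg b hb
  constructor
  · calc |(a + b).2.2.1| = |a.2.2.1 + b.2.2.1| := rfl
      _ ≤ |a.2.2.1| + |b.2.2.1| := abs_add_le _ _
      _ ≤ r + s := add_le_add ha1 hb1
  · calc |(a + b).2.2.2| = |a.2.2.2 + b.2.2.2| := rfl
      _ ≤ |a.2.2.2| + |b.2.2.2| := abs_add_le _ _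
      _ ≤ r + s := add_le_add ha2 hb2

theorem Bnd.one : Bnd 0 (1 : A4) := by
  intro x hx
  have := Finsupp.support_single_subset (a := (0 : G4)) (b := (1:ℝ)) hx
  simp only [Finset.mem_singleton] at this
  subst this
  simp

theorem Bnd.pow {r : ℤ} {f : A4} (hf : Bnd r f) (n : ℕ) : Bnd ((n : ℤ) * r) (f ^ n) := by
  induction n with
  | zero => simpa using Bnd.one
  | succ n ih =>
      rw [pow_succ]
      have := ih.mul hf
      have heq : ((n : ℤ) * r + r) = ((n+1 : ℕ) : ℤ) * r := by push_cast; ring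
      rwa [heq] at this

theorem bnd_single {M : ℕ} (v : G4) (c : ℝ) (h1 : |v.2.2.1| ≤ (M:ℤ)) (h2 : |v.2.2.2| ≤ (M:ℤ)) :
    Bnd (M : ℤ) (AddMonoidAlgebra.single v c : A4) := by
  intro x hx
  have := Finsupp.support_single_subset hx
  simp only [Finset.mem_singleton] at this
  subst this
  exact ⟨h1, h2⟩

theorem bnd_coupling (m M : ℕ) (q : Fin (m+1) → Fin M → ℝ) (s₁ s₂ t₁ t₂ : ℤ)
    (h₁ : |t₁| ≤ 1) (h₂ : |t₂| ≤ 1) : Bnd (M : ℤ) (couplingPoly4 m M q s₁ s₂ t₁ t₂) := by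
  intro x hx
  unfold couplingPoly4 at hx
  simp only [AddMonoidAlgebra.coeff_sum] at hx
  obtain ⟨i, -, hx2⟩ := Finsupp.mem_support_finset_sum x hx
  obtain ⟨j, -, hx4⟩ := Finsupp.mem_support_finset_sum x hx2
  have := Finsupp.support_single_subset hx4
  simp only [Finset.mem_singleton] at this
  subst this
  have hj : |(j : ℤ)| ≤ (M : ℤ) := by
    rw [abs_of_nonneg (by positivity)]
    exact_mod_cast (j.2).le
  constructor
  · show |t₁ * (j:ℤ)| ≤ _
    rw [abs_mul]
    calc |t₁| * |(j:ℤ)| ≤ 1 * (M:ℤ) := mul_le_mul h₁ hj (abs_nonneg _) zero_le_one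
      _ = (M:ℤ) := one_mul _
  · show |t₂ * (j:ℤ)| ≤ _
    rw [abs_mul]
    calc |t₂| * |(j:ℤ)| ≤ 1 * (M:ℤ) := mul_le_mul h₂ hj (abs_nonneg _) zero_le_one
      _ = (M:ℤ) := one_mul _

/-- the fixed finite index set -/
noncomputable def Tf (M : ℕ) (R : ℤ) : Finset (ℤ × ℤ) :=
  (Finset.Icc (-R) R ×ˢ Finset.Icc (-R) R).filter fun b => (M:ℤ) ∣ b.1 ∧ (M:ℤ) ∣ b.2

theorem mem_Tf {M : ℕ} {R : ℤ} {b : ℤ × ℤ} :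
    b ∈ Tf M R ↔ (|b.1| ≤ R ∧ |b.2| ≤ R) ∧ (M:ℤ) ∣ b.1 ∧ (M:ℤ) ∣ b.2 := by
  simp [Tf, Finset.mem_filter, Finset.mem_product, Finset.mem_Icc, abs_le, and_assoc]

theorem finsum_conv (M : ℕ) (R : ℤ) (h : ℤ × ℤ → ℝ)
    (hs : ∀ b, h b ≠ 0 → |b.1| ≤ R ∧ |b.2| ≤ R) :
    ∑ᶠ b ∈ {b : ℤ × ℤ | (M:ℤ) ∣ b.1 ∧ (M:ℤ) ∣ b.2}, h b = ∑ b ∈ Tf M R, h b := by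
  apply finsum_mem_eq_sum_of_inter_support_eq
  ext b
  simp only [Set.mem_inter_iff, Set.mem_setOf_eq, Function.mem_support, Finset.coe_sort_coe,
    Finset.mem_coe, mem_Tf]
  constructor
  · rintro ⟨hd, hne⟩
    exact ⟨⟨hs b hne, hd⟩, hne⟩
  · rintro ⟨⟨-, hd⟩, hne⟩
    exact ⟨hd, hne⟩

theorem sum_Tf_neg (M : ℕ) (R : ℤ) (h : ℤ × ℤ → ℝ) :
    ∑ b ∈ Tf M R, h (-b) = ∑ b ∈ Tf M R, h b := by
  apply Finset.sum_equiv (Equiv.neg (ℤ × ℤ))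
  · intro b
    simp only [Equiv.neg_apply, mem_Tf, Prod.fst_neg, Prod.snd_neg, abs_neg, dvd_neg]
  · intro b _
    simp



theorem coupling_update (m M : ℕ) (q : Fin (m+1) → Fin M → ℝ) (i : Fin (m+1)) (j : Fin M)
    (t : ℝ) (s₁ s₂ t₁ t₂ : ℤ) :
    couplingPoly4 m M (Function.update q i (Function.update (q i) j t)) s₁ s₂ t₁ t₂
      = couplingPoly4 m M q s₁ s₂ t₁ t₂
        + AddMonoidAlgebra.single (s₁ * (i:ℤ), s₂ * (i:ℤ), t₁ * (j:ℤ), t₂ * (j:ℤ)) (t - q i j) := by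
  classical
  unfold couplingPoly4
  have key : ∀ (i' : Fin (m+1)) (j' : Fin M),
      Function.update q i (Function.update (q i) j t) i' j'
        = q i' j' + (if i' = i ∧ j' = j then t - q i j else 0) := by
    intro i' j'
    rcases eq_or_ne i' i with rfl | hi
    · rcases eq_or_ne j' j with rfl | hj
      · simp
      · simp [Function.update_apply, hj]
    · simp [Function.update_apply, hi]
  have key2 : ∀ (i' : Fin (m+1)) (j' : Fin M),
      (AddMonoidAlgebra.single (s₁ * (i':ℤ), s₂ * (i':ℤ), t₁ * (j':ℤ), t₂ * (j':ℤ))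
        (if i' = i ∧ j' = j then t - q i j else 0) : A4)
      = if i' = i then (if j' = j then
          AddMonoidAlgebra.single (s₁ * (i:ℤ), s₂ * (i:ℤ), t₁ * (j:ℤ), t₂ * (j:ℤ)) (t - q i j)
          else 0) else 0 := by
    intro i' j'
    rcases eq_or_ne i' i with rfl | hi
    · rcases eq_or_ne j' j with rfl | hj
      · simp
      · simp [hj]
    · simp [hi]
  simp only [key, AddMonoidAlgebra.single_add, key2, Finset.sum_add_distrib]
  have h3 : (∑ x : Fin (m+1), ∑ y : Fin M,
      if x = i then (if y = j then (AddMonoidAlgebra.single (s₁ * (i:ℤ), s₂ * (i:ℤ), t₁ * (j:ℤ), t₂ * (j:ℤ)) (t - q i j) : A4) else 0) else 0)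
      = AddMonoidAlgebra.single (s₁ * (i:ℤ), s₂ * (i:ℤ), t₁ * (j:ℤ), t₂ * (j:ℤ)) (t - q i j) := by
    rw [Finset.sum_eq_single i ?_ ?_]
    · simp
    · intro b _ hb; simp [hb]
    · intro h; exact absurd (Finset.mem_univ i) h
  rw [h3]

theorem N_coupling (m M : ℕ) (q : Fin (m+1) → Fin M → ℝ) (s₁ s₂ t₁ t₂ : ℤ) :
    AddMonoidAlgebra.domCongr ℝ ℝ (AddEquiv.neg G4) (couplingPoly4 m M q s₁ s₂ t₁ t₂)
      = couplingPoly4 m M q (-s₁) (-s₂) (-t₁) (-t₂) := by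
  unfold couplingPoly4
  rw [map_sum]
  apply Finset.sum_congr rfl
  intro i _
  rw [map_sum]
  apply Finset.sum_congr rfl
  intro j _
  rw [AddMonoidAlgebra.domCongr_single]
  congr 1
  simp [Prod.ext_iff, AddEquiv.neg_apply]

theorem N_single (v : G4) (c : ℝ) :
    AddMonoidAlgebra.domCongr ℝ ℝ (AddEquiv.neg G4) (AddMonoidAlgebra.single v c : A4)
      = AddMonoidAlgebra.single (-v) c := by
  rw [AddMonoidAlgebra.domCongr_single]; rfl

theorem N_apply (f : A4) (x : G4) :
    (AddMonoidAlgebra.domCongr ℝ ℝ (AddEquiv.neg G4) f).coeff x = f.coeff (-x) := by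
  rw [AddMonoidAlgebra.coeff_domCongr]; simp

open Polynomial in
theorem hasDerivAt_eval_point (p : Polynomial A4) (x : G4) (c : ℝ) :
    HasDerivAt (fun t : ℝ => (p.eval (algebraMap ℝ A4 (t - c))).coeff x) ((p.coeff 1).coeff x) c := by
  have hrep : ∀ t : ℝ, (p.eval (algebraMap ℝ A4 (t - c))).coeff x
      = ∑ n ∈ Finset.range (p.natDegree + 2), (t - c)^n * ((p.coeff n).coeff x) := by
    intro t
    rw [Polynomial.eval_eq_sum_range' (by omega : p.natDegree < p.natDegree + 2)]
    rw [AddMonoidAlgebra.coeff_sum, Finsupp.finset_sum_apply]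
    apply Finset.sum_congr rfl
    intro n _
    rw [← map_pow, ← Algebra.commutes ((t-c)^n) (p.coeff n), ← Algebra.smul_def]
    rw [AddMonoidAlgebra.coeff_smul_apply]
    rfl
  have h1 : ∀ n ∈ Finset.range (p.natDegree+2),
      HasDerivAt (fun t : ℝ => (t - c)^n * ((p.coeff n).coeff x))
        ((↑n * (c - c)^(n-1) * 1) * ((p.coeff n).coeff x)) c :=
    fun n _ => (((hasDerivAt_id c).sub_const c).pow n).mul_const _
  have hD := HasDerivAt.fun_sum h1
  have hval : ∑ n ∈ Finset.range (p.natDegree+2), (↑n * (c - c)^(n-1) * 1) * ((p.coeff n).coeff x)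
      = (p.coeff 1).coeff x := by
    rw [Finset.sum_eq_single 1]
    · simp
    · intro n _ hne
      rcases Nat.eq_zero_or_pos n with rfl | hp
      · simp
      · have hn1 : n - 1 ≠ 0 := by omega
        simp [sub_self, zero_pow hn1]
    · intro h; exact absurd (Finset.mem_range.mpr (by omega)) h
  rw [hval] at hD
  have : (fun t : ℝ => (p.eval (algebraMap ℝ A4 (t - c))).coeff x)
      = fun t => ∑ n ∈ Finset.range (p.natDegree + 2), (t - c)^n * ((p.coeff n).coeff x) :=
    funext hrep
  rw [this]
  exact hD



theorem diff_mul_coupling (m M : ℕ) (s₁ s₂ t₁ t₂ : ℤ)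
    (P : (Fin (m+1) → Fin M → ℝ) → A4) (hP : ∀ x, Differentiable ℝ fun q => (P q).coeff x) :
    ∀ x : G4, Differentiable ℝ fun q => (couplingPoly4 m M q s₁ s₂ t₁ t₂ * P q).coeff x := by
  intro x
  have key : ∀ q : Fin (m+1) → Fin M → ℝ, (couplingPoly4 m M q s₁ s₂ t₁ t₂ * P q).coeff x
      = ∑ i : Fin (m+1), ∑ j : Fin M,
          q i j * (P q).coeff (-(s₁ * (i:ℤ), s₂ * (i:ℤ), t₁ * (j:ℤ), t₂ * (j:ℤ)) + x) := by
    intro q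
    unfold couplingPoly4
    rw [Finset.sum_mul, AddMonoidAlgebra.coeff_sum, Finsupp.finset_sum_apply]
    apply Finset.sum_congr rfl
    intro i _
    rw [Finset.sum_mul, AddMonoidAlgebra.coeff_sum, Finsupp.finset_sum_apply]
    apply Finset.sum_congr rfl
    intro j _
    exact AddMonoidAlgebra.coeff_single_mul_apply _ _ _ _
  have : (fun q => (couplingPoly4 m M q s₁ s₂ t₁ t₂ * P q).coeff x)
      = fun q : Fin (m+1) → Fin M → ℝ => ∑ i : Fin (m+1), ∑ j : Fin M,
          q i j * (P q).coeff (-(s₁ * (i:ℤ), s₂ * (i:ℤ), t₁ * (j:ℤ), t₂ * (j:ℤ)) + x) := funext key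
  rw [this]
  apply Differentiable.fun_sum
  intro i _
  apply Differentiable.fun_sum
  intro j _
  have hq : Differentiable ℝ (fun q : Fin (m+1) → Fin M → ℝ => q i j) :=
    differentiable_pi.mp (differentiable_pi.mp differentiable_id i) j
  exact hq.mul (hP _)

theorem diff_mul_pow (m M : ℕ) (s₁ s₂ t₁ t₂ : ℤ) (n : ℕ)
    (P : (Fin (m+1) → Fin M → ℝ) → A4) (hP : ∀ x, Differentiable ℝ fun q => (P q).coeff x) :
    ∀ x : G4, Differentiable ℝ fun q => (couplingPoly4 m M q s₁ s₂ t₁ t₂ ^ n * P q).coeff x := by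
  induction n generalizing P with
  | zero =>
      intro x
      simpa only [pow_zero, one_mul] using hP x
  | succ n ih =>
      intro x
      have h' := ih (fun q => couplingPoly4 m M q s₁ s₂ t₁ t₂ * P q)
        (diff_mul_coupling m M s₁ s₂ t₁ t₂ P hP) x
      have heq : (fun q => (couplingPoly4 m M q s₁ s₂ t₁ t₂ ^ (n+1) * P q).coeff x)
          = fun q => (couplingPoly4 m M q s₁ s₂ t₁ t₂ ^ n *
              (couplingPoly4 m M q s₁ s₂ t₁ t₂ * P q)).coeff x := by
        funext q
        rw [pow_succ, mul_assoc]
      rw [heq]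
      exact h'

theorem diff_one (m M : ℕ) : ∀ x : G4,
    Differentiable ℝ fun _ : Fin (m+1) → Fin M → ℝ => (1 : A4).coeff x :=
  fun _ => differentiable_const _



theorem add_apply4 (f g : A4) (x : G4) : (f + g).coeff x = f.coeff x + g.coeff x := by
  rw [AddMonoidAlgebra.coeff_add, Finsupp.add_apply]

theorem N_eval {f g : A4} (h : AddMonoidAlgebra.domCongr ℝ ℝ (AddEquiv.neg G4) f = g) :
    ∀ y : G4, f.coeff y = g.coeff (-y) := by
  intro y
  rw [← h, N_apply, neg_neg]

theorem eval_shift (P : A4) (a₁ a₂ a₃ a₄ y₁ y₂ y₃ y₄ : ℤ) :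
    (AddMonoidAlgebra.single ((a₁, a₂, a₃, a₄) : G4) (1:ℝ) * P).coeff ((y₁, y₂, y₃, y₄) : G4)
      = P.coeff (y₁ - a₁, y₂ - a₂, y₃ - a₃, y₄ - a₄) := by
  rw [AddMonoidAlgebra.coeff_single_mul_apply, one_mul]
  congr 1
  simp [Prod.ext_iff]
  omega

theorem cast_mul_apply (n : ℕ) (g : A4) (x : G4) : ((n : A4) * g).coeff x = (n : ℝ) * g.coeff x := by
  rw [← nsmul_eq_mul, AddMonoidAlgebra.coeff_smul_apply]
  simp

theorem N_prod5 (m M : ℕ) (q : Fin (m+1) → Fin M → ℝ) (n₁ n₂ n₃ n₄ : ℕ) (y : G4) :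
    (couplingPoly4 m M q (-1) (-1) (-1) (-1) * couplingPoly4 m M q (-1) 0 (-1) 0 ^ n₁ *
      couplingPoly4 m M q 1 0 1 0 ^ n₂ * couplingPoly4 m M q 0 (-1) 0 (-1) ^ n₃ *
      couplingPoly4 m M q 0 1 0 1 ^ n₄).coeff y
    = (couplingPoly4 m M q 1 1 1 1 * couplingPoly4 m M q 1 0 1 0 ^ n₁ *
      couplingPoly4 m M q (-1) 0 (-1) 0 ^ n₂ * couplingPoly4 m M q 0 1 0 1 ^ n₃ *
      couplingPoly4 m M q 0 (-1) 0 (-1) ^ n₄).coeff (-y) := by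
  apply N_eval
  simp only [map_mul, map_pow, N_coupling]
  norm_num

theorem N_prod6 (m M : ℕ) (q : Fin (m+1) → Fin M → ℝ) (n₁ n₂ n₃ n₄ : ℕ) (y : G4) :
    (couplingPoly4 m M q (-1) (-1) (-1) (-1) * couplingPoly4 m M q 1 1 1 1 *
      couplingPoly4 m M q (-1) 0 (-1) 0 ^ n₁ * couplingPoly4 m M q 1 0 1 0 ^ n₂ *
      couplingPoly4 m M q 0 (-1) 0 (-1) ^ n₃ * couplingPoly4 m M q 0 1 0 1 ^ n₄).coeff y
    = (couplingPoly4 m M q 1 1 1 1 * couplingPoly4 m M q (-1) (-1) (-1) (-1) *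
      couplingPoly4 m M q 1 0 1 0 ^ n₁ * couplingPoly4 m M q (-1) 0 (-1) 0 ^ n₂ *
      couplingPoly4 m M q 0 1 0 1 ^ n₃ * couplingPoly4 m M q 0 (-1) 0 (-1) ^ n₄).coeff (-y) := by
  apply N_eval
  simp only [map_mul, map_pow, N_coupling]
  norm_num

theorem algebraMap_eq_single (r : ℝ) :
    algebraMap ℝ A4 r = AddMonoidAlgebra.single (0 : G4) r := by
  rw [show algebraMap ℝ A4 r = (AddMonoidAlgebra.single (0:G4) ∘ algebraMap ℝ ℝ) r from
    congrFun AddMonoidAlgebra.coe_algebraMap r]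
  simp

theorem single_mul_algebraMap (v : G4) (r : ℝ) :
    AddMonoidAlgebra.single v (1:ℝ) * algebraMap ℝ A4 r = AddMonoidAlgebra.single v r := by
  rw [algebraMap_eq_single, AddMonoidAlgebra.single_mul_single]
  simp

end PDomAux

section Main

open AddMonoidAlgebra Polynomial PDomAux

set_option maxHeartbeats 2000000 in
/-- `P^𝒟_{2k,2l}` is differentiable in `q`, and its partial
derivative with respect to `q_{i,j}` is given by the displayed formula
(gradient of the characteristic polynomial of the dominant object pattern
classes of the `2k`-`2l` configuration). -/
theorem PDom_differentiable_and_partial_deriv (m M : ℕ) (hM : 1 ≤ M)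
    (k l : ℕ) (hk : 2 ≤ k) (hl : 2 ≤ l) :
    Differentiable ℝ (PDom m M k l) ∧
    ∀ (q : Fin (m + 1) → Fin M → ℝ) (i : Fin (m + 1)) (j : Fin M),
      HasDerivAt
        (fun t : ℝ => PDom m M k l (Function.update q i (Function.update (q i) j t)))
        (2 * ∑ᶠ b ∈ {b : ℤ × ℤ | (M : ℤ) ∣ b.1 ∧ (M : ℤ) ∣ b.2},
          ((couplingPoly4 m M q 1 1 1 1 *
              couplingPoly4 m M q 1 0 1 0 ^ (k - 1) *
              couplingPoly4 m M q (-1) 0 (-1) 0 ^ (k - 1) *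
              couplingPoly4 m M q 0 1 0 1 ^ (l - 1) *
              couplingPoly4 m M q 0 (-1) 0 (-1) ^ (l - 1)).coeff
              ((i : ℤ), (i : ℤ), b.1 + (j : ℤ), b.2 + (j : ℤ)) +
           ((k : ℝ) - 1) *
            (couplingPoly4 m M q 1 1 1 1 * couplingPoly4 m M q (-1) (-1) (-1) (-1) *
              couplingPoly4 m M q 1 0 1 0 ^ (k - 1) *
              couplingPoly4 m M q (-1) 0 (-1) 0 ^ (k - 2) *
              couplingPoly4 m M q 0 1 0 1 ^ (l - 1) *
              couplingPoly4 m M q 0 (-1) 0 (-1) ^ (l - 1)).coeff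
              ((i : ℤ), 0, b.1 + (j : ℤ), b.2) +
           ((l : ℝ) - 1) *
            (couplingPoly4 m M q 1 1 1 1 * couplingPoly4 m M q (-1) (-1) (-1) (-1) *
              couplingPoly4 m M q 1 0 1 0 ^ (k - 1) *
              couplingPoly4 m M q (-1) 0 (-1) 0 ^ (k - 1) *
              couplingPoly4 m M q 0 1 0 1 ^ (l - 1) *
              couplingPoly4 m M q 0 (-1) 0 (-1) ^ (l - 2)).coeff
              (0, (i : ℤ), b.1, b.2 + (j : ℤ))))
        (q i j) := by
  classical
  set R : ℤ := (2 * (k + l) + 1) * (M : ℤ) with hR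
  have hMz : (0:ℤ) ≤ (M:ℤ) := Int.natCast_nonneg M
  have hkz : (2:ℤ) ≤ (k:ℤ) := by exact_mod_cast hk
  have hlz : (2:ℤ) ≤ (l:ℤ) := by exact_mod_cast hl
  have hcast_k : ((k - 1 : ℕ) : ℤ) = (k:ℤ) - 1 := by
    push_cast [Nat.cast_sub (by omega : 1 ≤ k)]; ring
  have hcast_k2 : ((k - 2 : ℕ) : ℤ) = (k:ℤ) - 2 := by
    push_cast [Nat.cast_sub (by omega : 2 ≤ k)]; ring
  have hcast_l : ((l - 1 : ℕ) : ℤ) = (l:ℤ) - 1 := by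
    push_cast [Nat.cast_sub (by omega : 1 ≤ l)]; ring
  have hcast_l2 : ((l - 2 : ℕ) : ℤ) = (l:ℤ) - 2 := by
    push_cast [Nat.cast_sub (by omega : 2 ≤ l)]; ring
  have bC : ∀ (q' : Fin (m+1) → Fin M → ℝ) (s₁ s₂ : ℤ) (t₁ t₂ : ℤ), |t₁| ≤ 1 → |t₂| ≤ 1 →
      Bnd (M:ℤ) (couplingPoly4 m M q' s₁ s₂ t₁ t₂) := fun q' s₁ s₂ t₁ t₂ h₁ h₂ =>
    bnd_coupling m M q' s₁ s₂ t₁ t₂ h₁ h₂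
  have hbig : ∀ q' : Fin (m+1) → Fin M → ℝ,
      Bnd R (couplingPoly4 m M q' 1 1 1 1 * couplingPoly4 m M q' (-1) (-1) (-1) (-1) * couplingPoly4 m M q' 1 0 1 0 ^ (k - 1) * couplingPoly4 m M q' (-1) 0 (-1) 0 ^ (k - 1) * couplingPoly4 m M q' 0 1 0 1 ^ (l - 1) * couplingPoly4 m M q' 0 (-1) 0 (-1) ^ (l - 1)) := by
    intro q'
    have h := (((((bC q' 1 1 1 1 (by norm_num) (by norm_num)).mul
        (bC q' (-1) (-1) (-1) (-1) (by norm_num) (by norm_num))).mul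
        ((bC q' 1 0 1 0 (by norm_num) (by norm_num)).pow (k-1))).mul
        ((bC q' (-1) 0 (-1) 0 (by norm_num) (by norm_num)).pow (k-1))).mul
        ((bC q' 0 1 0 1 (by norm_num) (by norm_num)).pow (l-1))).mul
        ((bC q' 0 (-1) 0 (-1) (by norm_num) (by norm_num)).pow (l-1))
    refine h.mono ?_
    rw [hcast_k, hcast_l, hR]
    nlinarith [hMz, hkz, hlz]
  constructor
  · -- differentiability
    have hfun : PDom m M k l = fun q' : Fin (m+1) → Fin M → ℝ => ∑ b ∈ Tf M R,
        (couplingPoly4 m M q' 1 1 1 1 * couplingPoly4 m M q' (-1) (-1) (-1) (-1) * couplingPoly4 m M q' 1 0 1 0 ^ (k - 1) * couplingPoly4 m M q' (-1) 0 (-1) 0 ^ (k - 1) * couplingPoly4 m M q' 0 1 0 1 ^ (l - 1) * couplingPoly4 m M q' 0 (-1) 0 (-1) ^ (l - 1)).coeff ((0:ℤ), (0:ℤ), b.1, b.2) := by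
      funext q'
      unfold PDom
      exact finsum_conv M R _ (fun b hb => hbig q' _ (Finsupp.mem_support_iff.mpr hb))
    rw [hfun]
    apply Differentiable.fun_sum
    intro b _
    have h0 := diff_one m M
    have h1 := diff_mul_pow m M 0 (-1) 0 (-1) (l-1) (fun _ => (1:A4)) h0
    have h2 := diff_mul_pow m M 0 1 0 1 (l-1) _ h1
    have h3 := diff_mul_pow m M (-1) 0 (-1) 0 (k-1) _ h2
    have h4 := diff_mul_pow m M 1 0 1 0 (k-1) _ h3
    have h5 := diff_mul_coupling m M (-1) (-1) (-1) (-1) _ h4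
    have h6 := diff_mul_coupling m M 1 1 1 1 _ h5
    have heq : (fun q' : Fin (m+1) → Fin M → ℝ =>
        (couplingPoly4 m M q' 1 1 1 1 * couplingPoly4 m M q' (-1) (-1) (-1) (-1) * couplingPoly4 m M q' 1 0 1 0 ^ (k - 1) * couplingPoly4 m M q' (-1) 0 (-1) 0 ^ (k - 1) * couplingPoly4 m M q' 0 1 0 1 ^ (l - 1) * couplingPoly4 m M q' 0 (-1) 0 (-1) ^ (l - 1)).coeff ((0:ℤ), (0:ℤ), b.1, b.2))
        = fun q' : Fin (m+1) → Fin M → ℝ =>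
        (couplingPoly4 m M q' 1 1 1 1 * (couplingPoly4 m M q' (-1) (-1) (-1) (-1) * (couplingPoly4 m M q' 1 0 1 0 ^ (k - 1) * (couplingPoly4 m M q' (-1) 0 (-1) 0 ^ (k - 1) * (couplingPoly4 m M q' 0 1 0 1 ^ (l - 1) * (couplingPoly4 m M q' 0 (-1) 0 (-1) ^ (l - 1) * 1)))))).coeff ((0:ℤ), (0:ℤ), b.1, b.2) := by
      funext q'
      congr 1
      ring
    rw [heq]
    exact h6 _
  · -- derivative
    intro q i j
    have hj : |(j:ℤ)| ≤ (M:ℤ) := by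
      rw [abs_of_nonneg (by positivity)]
      exact_mod_cast (j.2).le
    have hckR : ((k - 1 : ℕ) : ℝ) = (k:ℝ) - 1 := by
      push_cast [Nat.cast_sub (by omega : 1 ≤ k)]; ring
    have hclR : ((l - 1 : ℕ) : ℝ) = (l:ℝ) - 1 := by
      push_cast [Nat.cast_sub (by omega : 1 ≤ l)]; ring
    -- update decompositions
    have hu₁ : ∀ t : ℝ, couplingPoly4 m M (Function.update q i (Function.update (q i) j t)) 1 1 1 1
        = couplingPoly4 m M q 1 1 1 1 + AddMonoidAlgebra.single (((i:ℤ), (i:ℤ), (j:ℤ), (j:ℤ)) : G4) (t - q i j) := by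
      intro t; rw [coupling_update]; norm_num
    have hu₂ : ∀ t : ℝ, couplingPoly4 m M (Function.update q i (Function.update (q i) j t)) (-1) (-1) (-1) (-1)
        = couplingPoly4 m M q (-1) (-1) (-1) (-1) + AddMonoidAlgebra.single ((-(i:ℤ), -(i:ℤ), -(j:ℤ), -(j:ℤ)) : G4) (t - q i j) := by
      intro t; rw [coupling_update]; norm_num
    have hu₃ : ∀ t : ℝ, couplingPoly4 m M (Function.update q i (Function.update (q i) j t)) 1 0 1 0
        = couplingPoly4 m M q 1 0 1 0 + AddMonoidAlgebra.single (((i:ℤ), (0:ℤ), (j:ℤ), (0:ℤ)) : G4) (t - q i j) := by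
      intro t; rw [coupling_update]; norm_num
    have hu₄ : ∀ t : ℝ, couplingPoly4 m M (Function.update q i (Function.update (q i) j t)) (-1) 0 (-1) 0
        = couplingPoly4 m M q (-1) 0 (-1) 0 + AddMonoidAlgebra.single ((-(i:ℤ), (0:ℤ), -(j:ℤ), (0:ℤ)) : G4) (t - q i j) := by
      intro t; rw [coupling_update]; norm_num
    have hu₅ : ∀ t : ℝ, couplingPoly4 m M (Function.update q i (Function.update (q i) j t)) 0 1 0 1
        = couplingPoly4 m M q 0 1 0 1 + AddMonoidAlgebra.single (((0:ℤ), (i:ℤ), (0:ℤ), (j:ℤ)) : G4) (t - q i j) := by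
      intro t; rw [coupling_update]; norm_num
    have hu₆ : ∀ t : ℝ, couplingPoly4 m M (Function.update q i (Function.update (q i) j t)) 0 (-1) 0 (-1)
        = couplingPoly4 m M q 0 (-1) 0 (-1) + AddMonoidAlgebra.single (((0:ℤ), -(i:ℤ), (0:ℤ), -(j:ℤ)) : G4) (t - q i j) := by
      intro t; rw [coupling_update]; norm_num
    set p : Polynomial A4 :=
      (Polynomial.C (couplingPoly4 m M q 1 1 1 1) + Polynomial.C (AddMonoidAlgebra.single (((i:ℤ), (i:ℤ), (j:ℤ), (j:ℤ)) : G4) (1:ℝ)) * Polynomial.X) *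
      (Polynomial.C (couplingPoly4 m M q (-1) (-1) (-1) (-1)) + Polynomial.C (AddMonoidAlgebra.single ((-(i:ℤ), -(i:ℤ), -(j:ℤ), -(j:ℤ)) : G4) (1:ℝ)) * Polynomial.X) *
      (Polynomial.C (couplingPoly4 m M q 1 0 1 0) + Polynomial.C (AddMonoidAlgebra.single (((i:ℤ), (0:ℤ), (j:ℤ), (0:ℤ)) : G4) (1:ℝ)) * Polynomial.X) ^ (k - 1) *
      (Polynomial.C (couplingPoly4 m M q (-1) 0 (-1) 0) + Polynomial.C (AddMonoidAlgebra.single ((-(i:ℤ), (0:ℤ), -(j:ℤ), (0:ℤ)) : G4) (1:ℝ)) * Polynomial.X) ^ (k - 1) *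
      (Polynomial.C (couplingPoly4 m M q 0 1 0 1) + Polynomial.C (AddMonoidAlgebra.single (((0:ℤ), (i:ℤ), (0:ℤ), (j:ℤ)) : G4) (1:ℝ)) * Polynomial.X) ^ (l - 1) *
      (Polynomial.C (couplingPoly4 m M q 0 (-1) 0 (-1)) + Polynomial.C (AddMonoidAlgebra.single (((0:ℤ), -(i:ℤ), (0:ℤ), -(j:ℤ)) : G4) (1:ℝ)) * Polynomial.X) ^ (l - 1)
      with hp
    have claimA : ∀ t : ℝ, Polynomial.eval (algebraMap ℝ A4 (t - q i j)) p
        = couplingPoly4 m M (Function.update q i (Function.update (q i) j t)) 1 1 1 1 * couplingPoly4 m M (Function.update q i (Function.update (q i) j t)) (-1) (-1) (-1) (-1) * couplingPoly4 m M (Function.update q i (Function.update (q i) j t)) 1 0 1 0 ^ (k - 1) * couplingPoly4 m M (Function.update q i (Function.update (q i) j t)) (-1) 0 (-1) 0 ^ (k - 1) * couplingPoly4 m M (Function.update q i (Function.update (q i) j t)) 0 1 0 1 ^ (l - 1) * couplingPoly4 m M (Function.update q i (Function.update (q i) j t)) 0 (-1) 0 (-1) ^ (l - 1) := by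
      intro t
      rw [hp]
      simp only [Polynomial.eval_mul, Polynomial.eval_pow, Polynomial.eval_add,
        Polynomial.eval_C, Polynomial.eval_X]
      rw [hu₁ t, hu₂ t, hu₃ t, hu₄ t, hu₅ t, hu₆ t]
      simp only [single_mul_algebraMap]
    have stepi : ∀ t : ℝ, PDom m M k l (Function.update q i (Function.update (q i) j t))
        = ∑ b ∈ Tf M R, (Polynomial.eval (algebraMap ℝ A4 (t - q i j)) p).coeff ((0:ℤ), (0:ℤ), b.1, b.2) := by
      intro t
      unfold PDom
      rw [finsum_conv M R _ (fun b hb => hbig _ _ (Finsupp.mem_support_iff.mpr hb))]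
      exact Finset.sum_congr rfl fun b _ => by rw [claimA t]
    have hder : HasDerivAt (fun t : ℝ => ∑ b ∈ Tf M R,
          (Polynomial.eval (algebraMap ℝ A4 (t - q i j)) p).coeff ((0:ℤ), (0:ℤ), b.1, b.2))
        (∑ b ∈ Tf M R, (p.coeff 1).coeff ((0:ℤ), (0:ℤ), b.1, b.2)) (q i j) :=
      HasDerivAt.fun_sum fun b _ => hasDerivAt_eval_point p ((0:ℤ), (0:ℤ), b.1, b.2) (q i j)
    have hfuneq : (fun t : ℝ => PDom m M k l (Function.update q i (Function.update (q i) j t)))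
        = fun t : ℝ => ∑ b ∈ Tf M R,
          (Polynomial.eval (algebraMap ℝ A4 (t - q i j)) p).coeff ((0:ℤ), (0:ℤ), b.1, b.2) :=
      funext stepi
    rw [hfuneq]
    convert hder using 1
    -- now: 2 * ∑ᶠ ... = ∑ b ∈ Tf M R, (p.coeff 1) (0,0,b.1,b.2)
    have hcoeff : p.coeff 1 =
      AddMonoidAlgebra.single (((i:ℤ), (i:ℤ), (j:ℤ), (j:ℤ)) : G4) (1:ℝ) * (couplingPoly4 m M q (-1) (-1) (-1) (-1) * couplingPoly4 m M q (-1) 0 (-1) 0 ^ (k - 1) * couplingPoly4 m M q 1 0 1 0 ^ (k - 1) * couplingPoly4 m M q 0 (-1) 0 (-1) ^ (l - 1) * couplingPoly4 m M q 0 1 0 1 ^ (l - 1))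
      + AddMonoidAlgebra.single ((-(i:ℤ), -(i:ℤ), -(j:ℤ), -(j:ℤ)) : G4) (1:ℝ) * (couplingPoly4 m M q 1 1 1 1 * couplingPoly4 m M q 1 0 1 0 ^ (k - 1) * couplingPoly4 m M q (-1) 0 (-1) 0 ^ (k - 1) * couplingPoly4 m M q 0 1 0 1 ^ (l - 1) * couplingPoly4 m M q 0 (-1) 0 (-1) ^ (l - 1))
      + ((k - 1 : ℕ) : A4) * (AddMonoidAlgebra.single (((i:ℤ), (0:ℤ), (j:ℤ), (0:ℤ)) : G4) (1:ℝ) * (couplingPoly4 m M q (-1) (-1) (-1) (-1) * couplingPoly4 m M q 1 1 1 1 * couplingPoly4 m M q (-1) 0 (-1) 0 ^ (k - 1) * couplingPoly4 m M q 1 0 1 0 ^ (k - 2) * couplingPoly4 m M q 0 (-1) 0 (-1) ^ (l - 1) * couplingPoly4 m M q 0 1 0 1 ^ (l - 1)))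
      + ((k - 1 : ℕ) : A4) * (AddMonoidAlgebra.single ((-(i:ℤ), (0:ℤ), -(j:ℤ), (0:ℤ)) : G4) (1:ℝ) * (couplingPoly4 m M q 1 1 1 1 * couplingPoly4 m M q (-1) (-1) (-1) (-1) * couplingPoly4 m M q 1 0 1 0 ^ (k - 1) * couplingPoly4 m M q (-1) 0 (-1) 0 ^ (k - 2) * couplingPoly4 m M q 0 1 0 1 ^ (l - 1) * couplingPoly4 m M q 0 (-1) 0 (-1) ^ (l - 1)))
      + ((l - 1 : ℕ) : A4) * (AddMonoidAlgebra.single (((0:ℤ), (i:ℤ), (0:ℤ), (j:ℤ)) : G4) (1:ℝ) * (couplingPoly4 m M q (-1) (-1) (-1) (-1) * couplingPoly4 m M q 1 1 1 1 * couplingPoly4 m M q (-1) 0 (-1) 0 ^ (k - 1) * couplingPoly4 m M q 1 0 1 0 ^ (k - 1) * couplingPoly4 m M q 0 (-1) 0 (-1) ^ (l - 1) * couplingPoly4 m M q 0 1 0 1 ^ (l - 2)))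
      + ((l - 1 : ℕ) : A4) * (AddMonoidAlgebra.single (((0:ℤ), -(i:ℤ), (0:ℤ), -(j:ℤ)) : G4) (1:ℝ) * (couplingPoly4 m M q 1 1 1 1 * couplingPoly4 m M q (-1) (-1) (-1) (-1) * couplingPoly4 m M q 1 0 1 0 ^ (k - 1) * couplingPoly4 m M q (-1) 0 (-1) 0 ^ (k - 1) * couplingPoly4 m M q 0 1 0 1 ^ (l - 1) * couplingPoly4 m M q 0 (-1) 0 (-1) ^ (l - 2))) := by
      have h0 : p.coeff 1 = (Polynomial.derivative p).eval 0 := by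
        rw [← Polynomial.coeff_zero_eq_eval_zero, Polynomial.coeff_derivative]
        norm_num
      rw [h0, hp]
      simp only [Polynomial.derivative_mul, Polynomial.derivative_pow, Polynomial.derivative_C,
        Polynomial.derivative_X, Polynomial.derivative_add, mul_one, zero_mul, mul_zero,
        zero_add, add_zero, Polynomial.eval_add, Polynomial.eval_mul, Polynomial.eval_pow,
        Polynomial.eval_C, Polynomial.eval_X]
      rw [show k - 1 - 1 = k - 2 from by omega, show l - 1 - 1 = l - 2 from by omega]
      ring
    have hbP₂ : Bnd (R - M) (couplingPoly4 m M q 1 1 1 1 * couplingPoly4 m M q 1 0 1 0 ^ (k - 1) * couplingPoly4 m M q (-1) 0 (-1) 0 ^ (k - 1) * couplingPoly4 m M q 0 1 0 1 ^ (l - 1) * couplingPoly4 m M q 0 (-1) 0 (-1) ^ (l - 1)) := by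
      have h := ((((bC q 1 1 1 1 (by norm_num) (by norm_num)).mul
          ((bC q 1 0 1 0 (by norm_num) (by norm_num)).pow (k-1))).mul
          ((bC q (-1) 0 (-1) 0 (by norm_num) (by norm_num)).pow (k-1))).mul
          ((bC q 0 1 0 1 (by norm_num) (by norm_num)).pow (l-1))).mul
          ((bC q 0 (-1) 0 (-1) (by norm_num) (by norm_num)).pow (l-1))
      refine h.mono ?_
      rw [hcast_k, hcast_l, hR]
      nlinarith [hMz, hkz, hlz]
    have hbP₄ : Bnd (R - M) (couplingPoly4 m M q 1 1 1 1 * couplingPoly4 m M q (-1) (-1) (-1) (-1) * couplingPoly4 m M q 1 0 1 0 ^ (k - 1) * couplingPoly4 m M q (-1) 0 (-1) 0 ^ (k - 2) * couplingPoly4 m M q 0 1 0 1 ^ (l - 1) * couplingPoly4 m M q 0 (-1) 0 (-1) ^ (l - 1)) := by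
      have h := (((((bC q 1 1 1 1 (by norm_num) (by norm_num)).mul
          (bC q (-1) (-1) (-1) (-1) (by norm_num) (by norm_num))).mul
          ((bC q 1 0 1 0 (by norm_num) (by norm_num)).pow (k-1))).mul
          ((bC q (-1) 0 (-1) 0 (by norm_num) (by norm_num)).pow (k-2))).mul
          ((bC q 0 1 0 1 (by norm_num) (by norm_num)).pow (l-1))).mul
          ((bC q 0 (-1) 0 (-1) (by norm_num) (by norm_num)).pow (l-1))
      refine h.mono ?_
      rw [hcast_k, hcast_k2, hcast_l, hR]
      nlinarith [hMz, hkz, hlz]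
    have hbP₆ : Bnd (R - M) (couplingPoly4 m M q 1 1 1 1 * couplingPoly4 m M q (-1) (-1) (-1) (-1) * couplingPoly4 m M q 1 0 1 0 ^ (k - 1) * couplingPoly4 m M q (-1) 0 (-1) 0 ^ (k - 1) * couplingPoly4 m M q 0 1 0 1 ^ (l - 1) * couplingPoly4 m M q 0 (-1) 0 (-1) ^ (l - 2)) := by
      have h := (((((bC q 1 1 1 1 (by norm_num) (by norm_num)).mul
          (bC q (-1) (-1) (-1) (-1) (by norm_num) (by norm_num))).mul
          ((bC q 1 0 1 0 (by norm_num) (by norm_num)).pow (k-1))).mul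
          ((bC q (-1) 0 (-1) 0 (by norm_num) (by norm_num)).pow (k-1))).mul
          ((bC q 0 1 0 1 (by norm_num) (by norm_num)).pow (l-1))).mul
          ((bC q 0 (-1) 0 (-1) (by norm_num) (by norm_num)).pow (l-2))
      refine h.mono ?_
      rw [hcast_k, hcast_l, hcast_l2, hR]
      nlinarith [hMz, hkz, hlz]
    have hgs : ∀ b : ℤ × ℤ,
        ((couplingPoly4 m M q 1 1 1 1 * couplingPoly4 m M q 1 0 1 0 ^ (k - 1) * couplingPoly4 m M q (-1) 0 (-1) 0 ^ (k - 1) * couplingPoly4 m M q 0 1 0 1 ^ (l - 1) * couplingPoly4 m M q 0 (-1) 0 (-1) ^ (l - 1)).coeff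
          ((i : ℤ), (i : ℤ), b.1 + (j : ℤ), b.2 + (j : ℤ)) +
       ((k : ℝ) - 1) *
        (couplingPoly4 m M q 1 1 1 1 * couplingPoly4 m M q (-1) (-1) (-1) (-1) * couplingPoly4 m M q 1 0 1 0 ^ (k - 1) * couplingPoly4 m M q (-1) 0 (-1) 0 ^ (k - 2) * couplingPoly4 m M q 0 1 0 1 ^ (l - 1) * couplingPoly4 m M q 0 (-1) 0 (-1) ^ (l - 1)).coeff
          ((i : ℤ), 0, b.1 + (j : ℤ), b.2) +
       ((l : ℝ) - 1) *
        (couplingPoly4 m M q 1 1 1 1 * couplingPoly4 m M q (-1) (-1) (-1) (-1) * couplingPoly4 m M q 1 0 1 0 ^ (k - 1) * couplingPoly4 m M q (-1) 0 (-1) 0 ^ (k - 1) * couplingPoly4 m M q 0 1 0 1 ^ (l - 1) * couplingPoly4 m M q 0 (-1) 0 (-1) ^ (l - 2)).coeff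
          (0, (i : ℤ), b.1, b.2 + (j : ℤ))) ≠ 0 → |b.1| ≤ R ∧ |b.2| ≤ R := by
      intro b hb
      have h3 : (couplingPoly4 m M q 1 1 1 1 * couplingPoly4 m M q 1 0 1 0 ^ (k - 1) * couplingPoly4 m M q (-1) 0 (-1) 0 ^ (k - 1) * couplingPoly4 m M q 0 1 0 1 ^ (l - 1) * couplingPoly4 m M q 0 (-1) 0 (-1) ^ (l - 1)).coeff ((i : ℤ), (i : ℤ), b.1 + (j : ℤ), b.2 + (j : ℤ)) ≠ 0
          ∨ (couplingPoly4 m M q 1 1 1 1 * couplingPoly4 m M q (-1) (-1) (-1) (-1) * couplingPoly4 m M q 1 0 1 0 ^ (k - 1) * couplingPoly4 m M q (-1) 0 (-1) 0 ^ (k - 2) * couplingPoly4 m M q 0 1 0 1 ^ (l - 1) * couplingPoly4 m M q 0 (-1) 0 (-1) ^ (l - 1)).coeff ((i : ℤ), 0, b.1 + (j : ℤ), b.2) ≠ 0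
          ∨ (couplingPoly4 m M q 1 1 1 1 * couplingPoly4 m M q (-1) (-1) (-1) (-1) * couplingPoly4 m M q 1 0 1 0 ^ (k - 1) * couplingPoly4 m M q (-1) 0 (-1) 0 ^ (k - 1) * couplingPoly4 m M q 0 1 0 1 ^ (l - 1) * couplingPoly4 m M q 0 (-1) 0 (-1) ^ (l - 2)).coeff (0, (i : ℤ), b.1, b.2 + (j : ℤ)) ≠ 0 := by
        by_contra hcc
        push_neg at hcc
        obtain ⟨h1, h2, h3⟩ := hcc
        apply hb
        rw [h1, h2, h3]
        ring
      rcases h3 with h | h | h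
      · obtain ⟨hB1, hB2⟩ := hbP₂ _ (Finsupp.mem_support_iff.mpr h)
        have h1' : |b.1 + (j:ℤ)| ≤ R - M := hB1
        have h2' : |b.2 + (j:ℤ)| ≤ R - M := hB2
        rw [abs_le] at h1' h2'
        have hj' := hj
        rw [abs_le] at hj'
        constructor <;> (rw [abs_le]; omega)
      · obtain ⟨hB1, hB2⟩ := hbP₄ _ (Finsupp.mem_support_iff.mpr h)
        have h1' : |b.1 + (j:ℤ)| ≤ R - M := hB1
        have h2' : |b.2| ≤ R - M := hB2
        rw [abs_le] at h1' h2'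
        have hj' := hj
        rw [abs_le] at hj'
        constructor <;> (rw [abs_le]; omega)
      · obtain ⟨hB1, hB2⟩ := hbP₆ _ (Finsupp.mem_support_iff.mpr h)
        have h1' : |b.1| ≤ R - M := hB1
        have h2' : |b.2 + (j:ℤ)| ≤ R - M := hB2
        rw [abs_le] at h1' h2'
        have hj' := hj
        rw [abs_le] at hj'
        constructor <;> (rw [abs_le]; omega)
    rw [finsum_conv M R _ hgs, hcoeff]
    have key : ∀ b ∈ Tf M R,
        (AddMonoidAlgebra.single (((i:ℤ), (i:ℤ), (j:ℤ), (j:ℤ)) : G4) (1:ℝ) * (couplingPoly4 m M q (-1) (-1) (-1) (-1) * couplingPoly4 m M q (-1) 0 (-1) 0 ^ (k - 1) * couplingPoly4 m M q 1 0 1 0 ^ (k - 1) * couplingPoly4 m M q 0 (-1) 0 (-1) ^ (l - 1) * couplingPoly4 m M q 0 1 0 1 ^ (l - 1))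
      + AddMonoidAlgebra.single ((-(i:ℤ), -(i:ℤ), -(j:ℤ), -(j:ℤ)) : G4) (1:ℝ) * (couplingPoly4 m M q 1 1 1 1 * couplingPoly4 m M q 1 0 1 0 ^ (k - 1) * couplingPoly4 m M q (-1) 0 (-1) 0 ^ (k - 1) * couplingPoly4 m M q 0 1 0 1 ^ (l - 1) * couplingPoly4 m M q 0 (-1) 0 (-1) ^ (l - 1))
      + ((k - 1 : ℕ) : A4) * (AddMonoidAlgebra.single (((i:ℤ), (0:ℤ), (j:ℤ), (0:ℤ)) : G4) (1:ℝ) * (couplingPoly4 m M q (-1) (-1) (-1) (-1) * couplingPoly4 m M q 1 1 1 1 * couplingPoly4 m M q (-1) 0 (-1) 0 ^ (k - 1) * couplingPoly4 m M q 1 0 1 0 ^ (k - 2) * couplingPoly4 m M q 0 (-1) 0 (-1) ^ (l - 1) * couplingPoly4 m M q 0 1 0 1 ^ (l - 1)))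
      + ((k - 1 : ℕ) : A4) * (AddMonoidAlgebra.single ((-(i:ℤ), (0:ℤ), -(j:ℤ), (0:ℤ)) : G4) (1:ℝ) * (couplingPoly4 m M q 1 1 1 1 * couplingPoly4 m M q (-1) (-1) (-1) (-1) * couplingPoly4 m M q 1 0 1 0 ^ (k - 1) * couplingPoly4 m M q (-1) 0 (-1) 0 ^ (k - 2) * couplingPoly4 m M q 0 1 0 1 ^ (l - 1) * couplingPoly4 m M q 0 (-1) 0 (-1) ^ (l - 1)))
      + ((l - 1 : ℕ) : A4) * (AddMonoidAlgebra.single (((0:ℤ), (i:ℤ), (0:ℤ), (j:ℤ)) : G4) (1:ℝ) * (couplingPoly4 m M q (-1) (-1) (-1) (-1) * couplingPoly4 m M q 1 1 1 1 * couplingPoly4 m M q (-1) 0 (-1) 0 ^ (k - 1) * couplingPoly4 m M q 1 0 1 0 ^ (k - 1) * couplingPoly4 m M q 0 (-1) 0 (-1) ^ (l - 1) * couplingPoly4 m M q 0 1 0 1 ^ (l - 2)))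
      + ((l - 1 : ℕ) : A4) * (AddMonoidAlgebra.single (((0:ℤ), -(i:ℤ), (0:ℤ), -(j:ℤ)) : G4) (1:ℝ) * (couplingPoly4 m M q 1 1 1 1 * couplingPoly4 m M q (-1) (-1) (-1) (-1) * couplingPoly4 m M q 1 0 1 0 ^ (k - 1) * couplingPoly4 m M q (-1) 0 (-1) 0 ^ (k - 1) * couplingPoly4 m M q 0 1 0 1 ^ (l - 1) * couplingPoly4 m M q 0 (-1) 0 (-1) ^ (l - 2)))).coeff ((0:ℤ), (0:ℤ), b.1, b.2)
        = ((couplingPoly4 m M q 1 1 1 1 * couplingPoly4 m M q 1 0 1 0 ^ (k - 1) * couplingPoly4 m M q (-1) 0 (-1) 0 ^ (k - 1) * couplingPoly4 m M q 0 1 0 1 ^ (l - 1) * couplingPoly4 m M q 0 (-1) 0 (-1) ^ (l - 1)).coeff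
          ((i : ℤ), (i : ℤ), (-b.1) + (j : ℤ), (-b.2) + (j : ℤ)) +
       ((k : ℝ) - 1) *
        (couplingPoly4 m M q 1 1 1 1 * couplingPoly4 m M q (-1) (-1) (-1) (-1) * couplingPoly4 m M q 1 0 1 0 ^ (k - 1) * couplingPoly4 m M q (-1) 0 (-1) 0 ^ (k - 2) * couplingPoly4 m M q 0 1 0 1 ^ (l - 1) * couplingPoly4 m M q 0 (-1) 0 (-1) ^ (l - 1)).coeff
          ((i : ℤ), 0, (-b.1) + (j : ℤ), (-b.2)) +
       ((l : ℝ) - 1) *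
        (couplingPoly4 m M q 1 1 1 1 * couplingPoly4 m M q (-1) (-1) (-1) (-1) * couplingPoly4 m M q 1 0 1 0 ^ (k - 1) * couplingPoly4 m M q (-1) 0 (-1) 0 ^ (k - 1) * couplingPoly4 m M q 0 1 0 1 ^ (l - 1) * couplingPoly4 m M q 0 (-1) 0 (-1) ^ (l - 2)).coeff
          (0, (i : ℤ), (-b.1), (-b.2) + (j : ℤ))) + ((couplingPoly4 m M q 1 1 1 1 * couplingPoly4 m M q 1 0 1 0 ^ (k - 1) * couplingPoly4 m M q (-1) 0 (-1) 0 ^ (k - 1) * couplingPoly4 m M q 0 1 0 1 ^ (l - 1) * couplingPoly4 m M q 0 (-1) 0 (-1) ^ (l - 1)).coeff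
          ((i : ℤ), (i : ℤ), b.1 + (j : ℤ), b.2 + (j : ℤ)) +
       ((k : ℝ) - 1) *
        (couplingPoly4 m M q 1 1 1 1 * couplingPoly4 m M q (-1) (-1) (-1) (-1) * couplingPoly4 m M q 1 0 1 0 ^ (k - 1) * couplingPoly4 m M q (-1) 0 (-1) 0 ^ (k - 2) * couplingPoly4 m M q 0 1 0 1 ^ (l - 1) * couplingPoly4 m M q 0 (-1) 0 (-1) ^ (l - 1)).coeff
          ((i : ℤ), 0, b.1 + (j : ℤ), b.2) +
       ((l : ℝ) - 1) *
        (couplingPoly4 m M q 1 1 1 1 * couplingPoly4 m M q (-1) (-1) (-1) (-1) * couplingPoly4 m M q 1 0 1 0 ^ (k - 1) * couplingPoly4 m M q (-1) 0 (-1) 0 ^ (k - 1) * couplingPoly4 m M q 0 1 0 1 ^ (l - 1) * couplingPoly4 m M q 0 (-1) 0 (-1) ^ (l - 2)).coeff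
          (0, (i : ℤ), b.1, b.2 + (j : ℤ))) := by
      intro b _
      simp only [add_apply4, cast_mul_apply, eval_shift]
      rw [N_prod5 m M q (k-1) (k-1) (l-1) (l-1), N_prod6 m M q (k-1) (k-2) (l-1) (l-1),
        N_prod6 m M q (k-1) (k-1) (l-1) (l-2)]
      have e1 : (-(((0:ℤ) - (i:ℤ), (0:ℤ) - (i:ℤ), b.1 - (j:ℤ), b.2 - (j:ℤ))) : G4)
          = ((i:ℤ), (i:ℤ), -b.1 + (j:ℤ), -b.2 + (j:ℤ)) := by
        simp only [Prod.neg_mk, Prod.mk.injEq]; omega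
      have e2 : (((0:ℤ) - -(i:ℤ), (0:ℤ) - -(i:ℤ), b.1 - -(j:ℤ), b.2 - -(j:ℤ)) : G4)
          = ((i:ℤ), (i:ℤ), b.1 + (j:ℤ), b.2 + (j:ℤ)) := by
        simp only [Prod.mk.injEq]; omega
      have e3 : (-(((0:ℤ) - (i:ℤ), (0:ℤ) - (0:ℤ), b.1 - (j:ℤ), b.2 - (0:ℤ))) : G4)
          = ((i:ℤ), 0, -b.1 + (j:ℤ), -b.2) := by
        simp only [Prod.neg_mk, Prod.mk.injEq]; omega
      have e4 : (((0:ℤ) - -(i:ℤ), (0:ℤ) - (0:ℤ), b.1 - -(j:ℤ), b.2 - (0:ℤ)) : G4)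
          = ((i:ℤ), 0, b.1 + (j:ℤ), b.2) := by
        simp only [Prod.mk.injEq]; omega
      have e5 : (-(((0:ℤ) - (0:ℤ), (0:ℤ) - (i:ℤ), b.1 - (0:ℤ), b.2 - (j:ℤ))) : G4)
          = (0, (i:ℤ), -b.1, -b.2 + (j:ℤ)) := by
        simp only [Prod.neg_mk, Prod.mk.injEq]; omega
      have e6 : (((0:ℤ) - (0:ℤ), (0:ℤ) - -(i:ℤ), b.1 - (0:ℤ), b.2 - -(j:ℤ)) : G4)
          = (0, (i:ℤ), b.1, b.2 + (j:ℤ)) := by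
        simp only [Prod.mk.injEq]; omega
      rw [e1, e2, e3, e4, e5, e6, hckR, hclR]
      ring
    rw [Finset.sum_congr rfl key]
    have hneg : (∑ b ∈ Tf M R, ((couplingPoly4 m M q 1 1 1 1 * couplingPoly4 m M q 1 0 1 0 ^ (k - 1) * couplingPoly4 m M q (-1) 0 (-1) 0 ^ (k - 1) * couplingPoly4 m M q 0 1 0 1 ^ (l - 1) * couplingPoly4 m M q 0 (-1) 0 (-1) ^ (l - 1)).coeff
          ((i : ℤ), (i : ℤ), (-b.1) + (j : ℤ), (-b.2) + (j : ℤ)) +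
       ((k : ℝ) - 1) *
        (couplingPoly4 m M q 1 1 1 1 * couplingPoly4 m M q (-1) (-1) (-1) (-1) * couplingPoly4 m M q 1 0 1 0 ^ (k - 1) * couplingPoly4 m M q (-1) 0 (-1) 0 ^ (k - 2) * couplingPoly4 m M q 0 1 0 1 ^ (l - 1) * couplingPoly4 m M q 0 (-1) 0 (-1) ^ (l - 1)).coeff
          ((i : ℤ), 0, (-b.1) + (j : ℤ), (-b.2)) +
       ((l : ℝ) - 1) *
        (couplingPoly4 m M q 1 1 1 1 * couplingPoly4 m M q (-1) (-1) (-1) (-1) * couplingPoly4 m M q 1 0 1 0 ^ (k - 1) * couplingPoly4 m M q (-1) 0 (-1) 0 ^ (k - 1) * couplingPoly4 m M q 0 1 0 1 ^ (l - 1) * couplingPoly4 m M q 0 (-1) 0 (-1) ^ (l - 2)).coeff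
          (0, (i : ℤ), (-b.1), (-b.2) + (j : ℤ))))
        = ∑ b ∈ Tf M R, ((couplingPoly4 m M q 1 1 1 1 * couplingPoly4 m M q 1 0 1 0 ^ (k - 1) * couplingPoly4 m M q (-1) 0 (-1) 0 ^ (k - 1) * couplingPoly4 m M q 0 1 0 1 ^ (l - 1) * couplingPoly4 m M q 0 (-1) 0 (-1) ^ (l - 1)).coeff
          ((i : ℤ), (i : ℤ), b.1 + (j : ℤ), b.2 + (j : ℤ)) +
       ((k : ℝ) - 1) *
        (couplingPoly4 m M q 1 1 1 1 * couplingPoly4 m M q (-1) (-1) (-1) (-1) * couplingPoly4 m M q 1 0 1 0 ^ (k - 1) * couplingPoly4 m M q (-1) 0 (-1) 0 ^ (k - 2) * couplingPoly4 m M q 0 1 0 1 ^ (l - 1) * couplingPoly4 m M q 0 (-1) 0 (-1) ^ (l - 1)).coeff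
          ((i : ℤ), 0, b.1 + (j : ℤ), b.2) +
       ((l : ℝ) - 1) *
        (couplingPoly4 m M q 1 1 1 1 * couplingPoly4 m M q (-1) (-1) (-1) (-1) * couplingPoly4 m M q 1 0 1 0 ^ (k - 1) * couplingPoly4 m M q (-1) 0 (-1) 0 ^ (k - 1) * couplingPoly4 m M q 0 1 0 1 ^ (l - 1) * couplingPoly4 m M q 0 (-1) 0 (-1) ^ (l - 2)).coeff
          (0, (i : ℤ), b.1, b.2 + (j : ℤ))) := by
      refine (Finset.sum_congr rfl fun b _ => ?_).trans
        (sum_Tf_neg M R (fun b => ((couplingPoly4 m M q 1 1 1 1 * couplingPoly4 m M q 1 0 1 0 ^ (k - 1) * couplingPoly4 m M q (-1) 0 (-1) 0 ^ (k - 1) * couplingPoly4 m M q 0 1 0 1 ^ (l - 1) * couplingPoly4 m M q 0 (-1) 0 (-1) ^ (l - 1)).coeff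
          ((i : ℤ), (i : ℤ), b.1 + (j : ℤ), b.2 + (j : ℤ)) +
       ((k : ℝ) - 1) *
        (couplingPoly4 m M q 1 1 1 1 * couplingPoly4 m M q (-1) (-1) (-1) (-1) * couplingPoly4 m M q 1 0 1 0 ^ (k - 1) * couplingPoly4 m M q (-1) 0 (-1) 0 ^ (k - 2) * couplingPoly4 m M q 0 1 0 1 ^ (l - 1) * couplingPoly4 m M q 0 (-1) 0 (-1) ^ (l - 1)).coeff
          ((i : ℤ), 0, b.1 + (j : ℤ), b.2) +
       ((l : ℝ) - 1) *
        (couplingPoly4 m M q 1 1 1 1 * couplingPoly4 m M q (-1) (-1) (-1) (-1) * couplingPoly4 m M q 1 0 1 0 ^ (k - 1) * couplingPoly4 m M q (-1) 0 (-1) 0 ^ (k - 1) * couplingPoly4 m M q 0 1 0 1 ^ (l - 1) * couplingPoly4 m M q 0 (-1) 0 (-1) ^ (l - 2)).coeff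
          (0, (i : ℤ), b.1, b.2 + (j : ℤ)))))
      simp only [Prod.fst_neg, Prod.snd_neg]
    calc 2 * (∑ b ∈ Tf M R, ((couplingPoly4 m M q 1 1 1 1 * couplingPoly4 m M q 1 0 1 0 ^ (k - 1) * couplingPoly4 m M q (-1) 0 (-1) 0 ^ (k - 1) * couplingPoly4 m M q 0 1 0 1 ^ (l - 1) * couplingPoly4 m M q 0 (-1) 0 (-1) ^ (l - 1)).coeff
          ((i : ℤ), (i : ℤ), b.1 + (j : ℤ), b.2 + (j : ℤ)) +
       ((k : ℝ) - 1) *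
        (couplingPoly4 m M q 1 1 1 1 * couplingPoly4 m M q (-1) (-1) (-1) (-1) * couplingPoly4 m M q 1 0 1 0 ^ (k - 1) * couplingPoly4 m M q (-1) 0 (-1) 0 ^ (k - 2) * couplingPoly4 m M q 0 1 0 1 ^ (l - 1) * couplingPoly4 m M q 0 (-1) 0 (-1) ^ (l - 1)).coeff
          ((i : ℤ), 0, b.1 + (j : ℤ), b.2) +
       ((l : ℝ) - 1) *
        (couplingPoly4 m M q 1 1 1 1 * couplingPoly4 m M q (-1) (-1) (-1) (-1) * couplingPoly4 m M q 1 0 1 0 ^ (k - 1) * couplingPoly4 m M q (-1) 0 (-1) 0 ^ (k - 1) * couplingPoly4 m M q 0 1 0 1 ^ (l - 1) * couplingPoly4 m M q 0 (-1) 0 (-1) ^ (l - 2)).coeff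
          (0, (i : ℤ), b.1, b.2 + (j : ℤ))))
        = (∑ b ∈ Tf M R, ((couplingPoly4 m M q 1 1 1 1 * couplingPoly4 m M q 1 0 1 0 ^ (k - 1) * couplingPoly4 m M q (-1) 0 (-1) 0 ^ (k - 1) * couplingPoly4 m M q 0 1 0 1 ^ (l - 1) * couplingPoly4 m M q 0 (-1) 0 (-1) ^ (l - 1)).coeff
          ((i : ℤ), (i : ℤ), (-b.1) + (j : ℤ), (-b.2) + (j : ℤ)) +
       ((k : ℝ) - 1) *
        (couplingPoly4 m M q 1 1 1 1 * couplingPoly4 m M q (-1) (-1) (-1) (-1) * couplingPoly4 m M q 1 0 1 0 ^ (k - 1) * couplingPoly4 m M q (-1) 0 (-1) 0 ^ (k - 2) * couplingPoly4 m M q 0 1 0 1 ^ (l - 1) * couplingPoly4 m M q 0 (-1) 0 (-1) ^ (l - 1)).coeff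
          ((i : ℤ), 0, (-b.1) + (j : ℤ), (-b.2)) +
       ((l : ℝ) - 1) *
        (couplingPoly4 m M q 1 1 1 1 * couplingPoly4 m M q (-1) (-1) (-1) (-1) * couplingPoly4 m M q 1 0 1 0 ^ (k - 1) * couplingPoly4 m M q (-1) 0 (-1) 0 ^ (k - 1) * couplingPoly4 m M q 0 1 0 1 ^ (l - 1) * couplingPoly4 m M q 0 (-1) 0 (-1) ^ (l - 2)).coeff
          (0, (i : ℤ), (-b.1), (-b.2) + (j : ℤ)))) + ∑ b ∈ Tf M R, ((couplingPoly4 m M q 1 1 1 1 * couplingPoly4 m M q 1 0 1 0 ^ (k - 1) * couplingPoly4 m M q (-1) 0 (-1) 0 ^ (k - 1) * couplingPoly4 m M q 0 1 0 1 ^ (l - 1) * couplingPoly4 m M q 0 (-1) 0 (-1) ^ (l - 1)).coeff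
          ((i : ℤ), (i : ℤ), b.1 + (j : ℤ), b.2 + (j : ℤ)) +
       ((k : ℝ) - 1) *
        (couplingPoly4 m M q 1 1 1 1 * couplingPoly4 m M q (-1) (-1) (-1) (-1) * couplingPoly4 m M q 1 0 1 0 ^ (k - 1) * couplingPoly4 m M q (-1) 0 (-1) 0 ^ (k - 2) * couplingPoly4 m M q 0 1 0 1 ^ (l - 1) * couplingPoly4 m M q 0 (-1) 0 (-1) ^ (l - 1)).coeff
          ((i : ℤ), 0, b.1 + (j : ℤ), b.2) +
       ((l : ℝ) - 1) *
        (couplingPoly4 m M q 1 1 1 1 * couplingPoly4 m M q (-1) (-1) (-1) (-1) * couplingPoly4 m M q 1 0 1 0 ^ (k - 1) * couplingPoly4 m M q (-1) 0 (-1) 0 ^ (k - 1) * couplingPoly4 m M q 0 1 0 1 ^ (l - 1) * couplingPoly4 m M q 0 (-1) 0 (-1) ^ (l - 2)).coeff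
          (0, (i : ℤ), b.1, b.2 + (j : ℤ))) := by
          rw [hneg]; ring
      _ = ∑ b ∈ Tf M R, (((couplingPoly4 m M q 1 1 1 1 * couplingPoly4 m M q 1 0 1 0 ^ (k - 1) * couplingPoly4 m M q (-1) 0 (-1) 0 ^ (k - 1) * couplingPoly4 m M q 0 1 0 1 ^ (l - 1) * couplingPoly4 m M q 0 (-1) 0 (-1) ^ (l - 1)).coeff
          ((i : ℤ), (i : ℤ), (-b.1) + (j : ℤ), (-b.2) + (j : ℤ)) +
       ((k : ℝ) - 1) *
        (couplingPoly4 m M q 1 1 1 1 * couplingPoly4 m M q (-1) (-1) (-1) (-1) * couplingPoly4 m M q 1 0 1 0 ^ (k - 1) * couplingPoly4 m M q (-1) 0 (-1) 0 ^ (k - 2) * couplingPoly4 m M q 0 1 0 1 ^ (l - 1) * couplingPoly4 m M q 0 (-1) 0 (-1) ^ (l - 1)).coeff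
          ((i : ℤ), 0, (-b.1) + (j : ℤ), (-b.2)) +
       ((l : ℝ) - 1) *
        (couplingPoly4 m M q 1 1 1 1 * couplingPoly4 m M q (-1) (-1) (-1) (-1) * couplingPoly4 m M q 1 0 1 0 ^ (k - 1) * couplingPoly4 m M q (-1) 0 (-1) 0 ^ (k - 1) * couplingPoly4 m M q 0 1 0 1 ^ (l - 1) * couplingPoly4 m M q 0 (-1) 0 (-1) ^ (l - 2)).coeff
          (0, (i : ℤ), (-b.1), (-b.2) + (j : ℤ))) + ((couplingPoly4 m M q 1 1 1 1 * couplingPoly4 m M q 1 0 1 0 ^ (k - 1) * couplingPoly4 m M q (-1) 0 (-1) 0 ^ (k - 1) * couplingPoly4 m M q 0 1 0 1 ^ (l - 1) * couplingPoly4 m M q 0 (-1) 0 (-1) ^ (l - 1)).coeff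
          ((i : ℤ), (i : ℤ), b.1 + (j : ℤ), b.2 + (j : ℤ)) +
       ((k : ℝ) - 1) *
        (couplingPoly4 m M q 1 1 1 1 * couplingPoly4 m M q (-1) (-1) (-1) (-1) * couplingPoly4 m M q 1 0 1 0 ^ (k - 1) * couplingPoly4 m M q (-1) 0 (-1) 0 ^ (k - 2) * couplingPoly4 m M q 0 1 0 1 ^ (l - 1) * couplingPoly4 m M q 0 (-1) 0 (-1) ^ (l - 1)).coeff
          ((i : ℤ), 0, b.1 + (j : ℤ), b.2) +
       ((l : ℝ) - 1) *
        (couplingPoly4 m M q 1 1 1 1 * couplingPoly4 m M q (-1) (-1) (-1) (-1) * couplingPoly4 m M q 1 0 1 0 ^ (k - 1) * couplingPoly4 m M q (-1) 0 (-1) 0 ^ (k - 1) * couplingPoly4 m M q 0 1 0 1 ^ (l - 1) * couplingPoly4 m M q 0 (-1) 0 (-1) ^ (l - 2)).coeff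
          (0, (i : ℤ), b.1, b.2 + (j : ℤ)))) := Finset.sum_add_distrib.symm

end Main
end
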